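/- arXiv:1602.07713 — 7 statements merged into one kernel-verified Lean document; each statement's English description precedes it below -/
import Mathlib

section
/- Let q and α be reals with 0 < q < 1 and 0 < α < 1, and let m < n be integers. Then (q^m − q^n)_q^{−α} = ((1 − q^{n−m})/(q^α − q^{n−m})) · (q^{m−1} − q^n)_q^{−α}. -/
open Real

lemma summable_log_one_sub_rpow (q c : ℝ) (hq0 : 0 < q) (hq1 : q < 1) (hc : 0 < c) :
    Summable (fun j : ℕ => Real.log (1 - q ^ (c + (j : ℝ)))) := by
  have hqc : q ^ c < 1 := Real.rpow_lt_one hq0.le hq1 hc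
  have hqcpos : (0:ℝ) < 1 - q ^ c := by linarith
  apply Summable.of_norm
  have hgeom : Summable (fun j : ℕ => (q ^ c / (1 - q ^ c)) * q ^ j) :=
    (summable_geometric_of_lt_one hq0.le hq1).mul_left _
  apply hgeom.of_nonneg_of_le (fun j => norm_nonneg _)
  intro j
  have ht0 : 0 < q ^ (c + (j : ℝ)) := Real.rpow_pos_of_pos hq0 _
  have hle : q ^ (c + (j : ℝ)) ≤ q ^ c := by
    rw [Real.rpow_add hq0]
    calc q ^ c * q ^ (j:ℝ) ≤ q ^ c * 1 := by
          apply mul_le_mul_of_nonneg_left _ (Real.rpow_pos_of_pos hq0 c).le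
          exact (Real.rpow_le_one hq0.le hq1.le (Nat.cast_nonneg j))
      _ = q ^ c := mul_one _
  have ht1 : q ^ (c + (j : ℝ)) < 1 := lt_of_le_of_lt hle hqc
  have hpos : (0:ℝ) < 1 - q ^ (c + (j : ℝ)) := by linarith
  have hlog : Real.log (1 - q ^ (c + (j : ℝ))) ≤ 0 := by
    apply Real.log_nonpos (by linarith) (by linarith)
  rw [Real.norm_eq_abs, abs_of_nonpos hlog]
  have h1 : -Real.log (1 - q ^ (c + (j : ℝ))) = Real.log ((1 - q ^ (c + (j : ℝ)))⁻¹) := by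
    rw [Real.log_inv]
  rw [h1]
  have h2 : Real.log ((1 - q ^ (c + (j : ℝ)))⁻¹) ≤ (1 - q ^ (c + (j : ℝ)))⁻¹ - 1 :=
    Real.log_le_sub_one_of_pos (by positivity)
  have h3 : (1 - q ^ (c + (j : ℝ)))⁻¹ - 1 = q ^ (c + (j : ℝ)) / (1 - q ^ (c + (j : ℝ))) := by
    field_simp
    ring
  have h4 : q ^ (c + (j : ℝ)) / (1 - q ^ (c + (j : ℝ))) ≤ (q ^ c / (1 - q ^ c)) * q ^ j := by
    rw [Real.rpow_add hq0, Real.rpow_natCast] at hpos hle ⊢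
    calc q ^ c * q ^ j / (1 - q ^ c * q ^ j) ≤ q ^ c * q ^ j / (1 - q ^ c) := by
          apply div_le_div_of_nonneg_left (by positivity) hqcpos (by linarith)
      _ = (q ^ c / (1 - q ^ c)) * q ^ j := by ring
  linarith



/-- The q-factorial power `(q^m - q^k)_q^{-α}` for integers `m < k`, defined by the
convergent infinite product
`q^{-mα} · ∏_{j=0}^∞ (1 - q^{k-m+j}) / (1 - q^{k-m+j-α})`. -/
noncomputable def qFac (q α : ℝ) (m k : ℤ) : ℝ :=
  q ^ (-(m : ℝ) * α) *
    ∏' j : ℕ, (1 - q ^ (((k - m : ℤ) : ℝ) + (j : ℝ))) /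
      (1 - q ^ (((k - m : ℤ) : ℝ) + (j : ℝ) - α))

set_option maxHeartbeats 1000000 in
theorem qFac_shift_first (q α : ℝ) (hq0 : 0 < q) (hq1 : q < 1)
    (hα0 : 0 < α) (hα1 : α < 1) (m n : ℤ) (hmn : m < n) :
    qFac q α m n =
      ((1 - q ^ ((n - m : ℤ) : ℝ)) / (q ^ α - q ^ ((n - m : ℤ) : ℝ))) *
        qFac q α (m - 1) n := by
  set d : ℝ := ((n - m : ℤ) : ℝ) with hd
  have hd1 : 1 ≤ d := by
    rw [hd]; exact_mod_cast Int.add_one_le_iff.mpr (by omega : (0:ℤ) < n - m)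
  have hdα : 0 < d - α := by linarith
  set g : ℕ → ℝ := fun j => (1 - q ^ (d + (j : ℝ))) / (1 - q ^ (d + (j : ℝ) - α)) with hg
  -- positivity of factors
  have hlt1 : ∀ x : ℝ, 0 < x → 0 < 1 - q ^ x := fun x hx => by
    have := Real.rpow_lt_one hq0.le hq1 hx; linarith
  have hnum : ∀ j : ℕ, 0 < 1 - q ^ (d + (j : ℝ)) := fun j =>
    hlt1 _ (by positivity)
  have hden : ∀ j : ℕ, 0 < 1 - q ^ (d + (j : ℝ) - α) := fun j => by
    have : (0:ℝ) < d + (j : ℝ) - α := by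
      have : (0:ℝ) ≤ (j : ℝ) := Nat.cast_nonneg j
      linarith
    exact hlt1 _ this
  have hgpos : ∀ j : ℕ, 0 < g j := fun j => div_pos (hnum j) (hden j)
  -- summability of logs
  have hs1 := summable_log_one_sub_rpow q d hq0 hq1 (by linarith)
  have hs2 := summable_log_one_sub_rpow q (d - α) hq0 hq1 hdα
  have hslog : Summable (fun j : ℕ => Real.log (g j)) := by
    have : (fun j : ℕ => Real.log (g j)) = fun j : ℕ =>
        Real.log (1 - q ^ (d + (j : ℝ))) - Real.log (1 - q ^ ((d - α) + (j : ℝ))) := by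
      funext j
      rw [hg]
      rw [Real.log_div (ne_of_gt (hnum j)) (ne_of_gt (hden j))]
      congr 2
      ring
    rw [this]
    exact hs1.sub hs2
  have hmult : Multipliable g :=
    Real.multipliable_of_summable_log (fun j => hgpos j) hslog
  have hslog1 : Summable (fun j : ℕ => Real.log (g (j + 1))) :=
    (summable_nat_add_iff 1).2 hslog
  have hmult1 : Multipliable (fun j : ℕ => g (j + 1)) :=
    Real.multipliable_of_summable_log (fun j => hgpos (j + 1)) hslog1
  have hpeel : (∏' j : ℕ, g j) = g 0 * ∏' j : ℕ, g (j + 1) := tprod_eq_zero_mul' hmult1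
  have hshift : (∏' j : ℕ, g (j + 1)) =
      ∏' j : ℕ, (1 - q ^ (((n - (m - 1) : ℤ) : ℝ) + (j : ℝ))) /
        (1 - q ^ (((n - (m - 1) : ℤ) : ℝ) + (j : ℝ) - α)) := by
    apply tprod_congr
    intro j
    have h1 : ((n - (m - 1) : ℤ) : ℝ) = d + 1 := by rw [hd]; push_cast; ring
    have h2 : d + ((j + 1 : ℕ) : ℝ) = d + 1 + (j : ℝ) := by push_cast; ring
    rw [hg]
    simp only [h1, h2]
  rw [qFac, qFac, ← hd]
  rw [show (∏' j : ℕ, (1 - q ^ (d + (j : ℝ))) / (1 - q ^ (d + (j : ℝ) - α)))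
      = ∏' j : ℕ, g j from rfl, hpeel, hshift]
  have hg0 : g 0 = (1 - q ^ d) / (1 - q ^ (d - α)) := by
    rw [hg]; norm_num
  rw [hg0]
  have hqα : (0:ℝ) < q ^ α := Real.rpow_pos_of_pos hq0 α
  have hfac : q ^ α - q ^ d = q ^ α * (1 - q ^ (d - α)) := by
    rw [mul_sub, mul_one, ← Real.rpow_add hq0, show α + (d - α) = d by ring]
  have hexp : q ^ (-(((m - 1 : ℤ)) : ℝ) * α) = q ^ (-(m : ℝ) * α) * q ^ α := by
    rw [← Real.rpow_add hq0]; congr 1; push_cast; ring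
  rw [hexp, hfac]
  have hne1 : (1 - q ^ (d - α)) ≠ 0 := ne_of_gt (hlt1 _ hdα)
  field_simp
end

section
/- Let q ∈ (0,1), let α be a real that is not an integer, and let m, k be integers with k ≥ m + 2. Then the nabla q-derivative of the q-factorial power with respect to its first variable satisfies [(q^m − q^k)_q^{α} − (q^{m+1} − q^k)_q^{α}] / ((1 − q) q^m) = ((1 − q^{α})/(1 − q)) · (q^m − q^k)_q^{α−1}. -/
open Real Filter Finset

lemma myAbsLog {x : ℝ} (hx : |x| ≤ 1/2) : |Real.log (1 - x)| ≤ 2 * |x| := by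
  have h1 : |x| < 1 := lt_of_le_of_lt hx (by norm_num)
  have h := Real.abs_log_sub_add_sum_range_le h1 0
  simp only [Finset.range_zero, Finset.sum_empty, zero_add, pow_one] at h
  calc |Real.log (1 - x)| ≤ |x| / (1 - |x|) := h
    _ ≤ |x| / (1/2) := by gcongr; · norm_num; · linarith
    _ = 2 * |x| := by ring

lemma mySummableLog (q c : ℝ) (hq0 : 0 < q) (hq1 : q < 1)
    (hc : ∀ j : ℕ, |c * q ^ j| ≤ 1/2) :
    Summable (fun j : ℕ => Real.log (1 - c * q ^ j)) := by
  rw [← summable_abs_iff]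
  apply Summable.of_nonneg_of_le (fun j => abs_nonneg _) (fun j => myAbsLog (hc j))
  have h : Summable (fun j : ℕ => (2 * |c|) * q ^ j) :=
    (summable_geometric_of_lt_one hq0.le hq1).mul_left _
  apply h.congr
  intro j
  rw [abs_mul, abs_pow, abs_of_pos hq0]
  ring

lemma myMultipliable (q A B : ℝ) (hq0 : 0 < q) (hq1 : q < 1) :
    Multipliable (fun j : ℕ => (1 - A * q ^ j) / (1 - B * q ^ j)) := by
  obtain ⟨N, hN⟩ : ∃ N : ℕ, ∀ j ≥ N, |A| * q ^ j ≤ 1/2 ∧ |B| * q ^ j ≤ 1/2 := by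
    have h0 : Tendsto (fun j : ℕ => q ^ j) atTop (nhds 0) :=
      tendsto_pow_atTop_nhds_zero_of_lt_one hq0.le hq1
    have hA := (h0.const_mul |A|).eventually_le_const (show |A| * (0:ℝ) < 1/2 by norm_num)
    have hB := (h0.const_mul |B|).eventually_le_const (show |B| * (0:ℝ) < 1/2 by norm_num)
    exact eventually_atTop.mp (hA.and hB)
  apply Multipliable.comp_nat_add (k := N)
  have hsmall : ∀ (c : ℝ), (∀ j ≥ N, |c| * q ^ j ≤ 1/2) → ∀ j : ℕ, |c * q ^ N * q ^ j| ≤ 1/2 := by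
    intro c hc j
    rw [show c * q ^ N * q ^ j = c * q ^ (j + N) by ring, abs_mul, abs_pow, abs_of_pos hq0]
    exact hc (j + N) (by omega)
  have hAq : ∀ j : ℕ, |A * q ^ N * q ^ j| ≤ 1/2 := hsmall A (fun j hj => (hN j hj).1)
  have hBq : ∀ j : ℕ, |B * q ^ N * q ^ j| ≤ 1/2 := hsmall B (fun j hj => (hN j hj).2)
  have hpos : ∀ (c : ℝ), (∀ j : ℕ, |c * q ^ N * q ^ j| ≤ 1/2) →
      ∀ j : ℕ, (0:ℝ) < 1 - c * q ^ N * q ^ j := by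
    intro c hc j
    have h1 := le_abs_self (c * q ^ N * q ^ j)
    linarith [h1.trans (hc j)]
  have key := Real.multipliable_of_summable_log
    (f := fun j => (1 - (A * q ^ N) * q ^ j) / (1 - (B * q ^ N) * q ^ j))
    (fun j => div_pos (hpos A hAq j) (hpos B hBq j))
    ?_
  · apply key.congr
    intro j
    rw [show A * q ^ N * q ^ j = A * q ^ (j + N) by ring,
      show B * q ^ N * q ^ j = B * q ^ (j + N) by ring]
  · have hA' := mySummableLog q (A * q ^ N) hq0 hq1 hAq
    have hB' := mySummableLog q (B * q ^ N) hq0 hq1 hBq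
    apply (hA'.sub hB').congr
    intro j
    rw [Real.log_div (hpos A hAq j).ne' (hpos B hBq j).ne']

lemma myTelescope (q B : ℝ) (hq0 : 0 < q) (hq1 : q < 1)
    (hB : ∀ j : ℕ, 1 - B * q ^ j ≠ 0) :
    ∏' j : ℕ, (1 - (B * q) * q ^ j) / (1 - B * q ^ j) = (1 - B)⁻¹ := by
  have hmult := myMultipliable q (B * q) B hq0 hq1
  apply HasProd.tprod_eq
  rw [hmult.hasProd_iff_tendsto_nat]
  have key : ∀ n : ℕ, ∏ j ∈ range n, (1 - (B * q) * q ^ j) / (1 - B * q ^ j)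
      = (1 - B * q ^ n) / (1 - B) := by
    intro n
    induction n with
    | zero =>
      have h0 := hB 0
      rw [pow_zero, mul_one] at h0
      simp [div_self h0]
    | succ n ih =>
      rw [prod_range_succ, ih, div_mul_div_comm,
        show (B * q) * q ^ n = B * q ^ (n + 1) by ring, mul_comm (1 - B) (1 - B * q ^ n), mul_div_mul_left _ _ (hB n)]
  simp only [key]
  have h1 : Tendsto (fun n : ℕ => 1 - B * q ^ n) atTop (nhds 1) := by
    have h0 : Tendsto (fun j : ℕ => q ^ j) atTop (nhds 0) :=
      tendsto_pow_atTop_nhds_zero_of_lt_one hq0.le hq1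
    have := (h0.const_mul B).const_sub 1
    simpa using this
  have := h1.div_const (1 - B)
  simpa using this



/-- The q-factorial power `(q^m - q^k)_q^{β}` for integers `m < k`, defined by the
convergent infinite product
`q^{mβ} · ∏_{j=0}^∞ (1 - q^{k-m+j}) / (1 - q^{k-m+j+β})`. -/
noncomputable def qFacB (q β : ℝ) (m k : ℤ) : ℝ :=
  q ^ ((m : ℝ) * β) *
    ∏' j : ℕ, (1 - q ^ (((k - m : ℤ) : ℝ) + (j : ℝ))) /
      (1 - q ^ (((k - m : ℤ) : ℝ) + (j : ℝ) + β))

/-- The nabla q-derivative of `t ↦ (t - q^k)_q^α` with respect to the first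
variable at `t = q^m` equals `[α]_q · (q^m - q^k)_q^{α-1}`. -/
theorem qFac_nabla_first (q α : ℝ) (hq0 : 0 < q) (hq1 : q < 1)
    (hα : ∀ z : ℤ, α ≠ (z : ℝ)) (m k : ℤ) (hk : m + 2 ≤ k) :
    (qFacB q α m k - qFacB q α (m + 1) k) / ((1 - q) * q ^ (m : ℝ)) =
      ((1 - q ^ α) / (1 - q)) * qFacB q (α - 1) m k := by
  set d : ℝ := ((k - m : ℤ) : ℝ) with hd
  set W : ℝ := q ^ (d - 1) with hW
  set Y : ℝ := q ^ α with hY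
  -- basic nonvanishing
  have hne : ∀ t : ℝ, t ≠ 0 → 1 - q ^ t ≠ 0 := by
    intro t ht
    rw [sub_ne_zero]
    rcases ht.lt_or_gt with h | h
    · exact (Real.one_lt_rpow_of_pos_of_lt_one_of_neg hq0 hq1 h).ne
    · exact (Real.rpow_lt_one hq0.le hq1 h).ne'
  have hWY : ∀ j : ℕ, 1 - W * Y * q ^ j ≠ 0 := by
    intro j
    have hrw : W * Y * q ^ j = q ^ (d - 1 + α + (j : ℝ)) := by
      rw [Real.rpow_add hq0, Real.rpow_add hq0, Real.rpow_natCast]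
    rw [hrw]
    apply hne
    intro h0
    apply hα (1 + m - k - j)
    have hav : α = 1 - d - (j : ℝ) := by linarith
    rw [hav, hd]
    push_cast
    ring
  have hWqY : ∀ j : ℕ, 1 - W * q * Y * q ^ j ≠ 0 := by
    intro j
    have hrw : W * q * Y * q ^ j = q ^ (d - 1 + 1 + α + (j : ℝ)) := by
      rw [Real.rpow_add hq0, Real.rpow_add hq0, Real.rpow_add hq0, Real.rpow_one,
        Real.rpow_natCast]
    rw [hrw]
    apply hne
    intro h0
    apply hα (m - k - j)
    have hav : α = -d - (j : ℝ) := by linarith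
    rw [hav, hd]
    push_cast
    ring
  -- the three canonical sequences
  set F1 : ℕ → ℝ := fun j => (1 - W * q * q ^ j) / (1 - W * q * Y * q ^ j) with hF1
  set F2 : ℕ → ℝ := fun j => (1 - W * q ^ j) / (1 - W * Y * q ^ j) with hF2
  set F3 : ℕ → ℝ := fun j => (1 - W * q * q ^ j) / (1 - W * Y * q ^ j) with hF3
  set c : ℕ → ℝ := fun j => (1 - W * Y * q * q ^ j) / (1 - W * Y * q ^ j) with hc
  have hMF1 : Multipliable F1 := myMultipliable q (W * q) (W * q * Y) hq0 hq1
  have hMc : Multipliable c := by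
    have := myMultipliable q (W * Y * q) (W * Y) hq0 hq1
    exact this.congr (fun j => by rw [hc])
  set P : ℝ := ∏' j, F1 j with hP
  -- identify the three tprods
  have e1 : qFacB q α m k = q ^ ((m : ℝ) * α) * P := by
    rw [qFacB, hP]
    congr 1
    apply tprod_congr
    intro j
    rw [hF1, ← hd]
    congr 2
    · rw [show d + (j : ℝ) = d - 1 + 1 + (j : ℝ) by ring, Real.rpow_add hq0,
        Real.rpow_add hq0, Real.rpow_one, Real.rpow_natCast, hW]
    · rw [show d + (j : ℝ) + α = d - 1 + 1 + α + (j : ℝ) by ring, Real.rpow_add hq0,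
        Real.rpow_add hq0, Real.rpow_add hq0, Real.rpow_one, Real.rpow_natCast, hW, hY]
  have e2 : qFacB q α (m + 1) k = q ^ (((m + 1 : ℤ) : ℝ) * α) * ((1 - W) / (1 - W * Y) * P) := by
    rw [qFacB]
    congr 1
    have hd1 : ((k - (m + 1) : ℤ) : ℝ) = d - 1 := by rw [hd]; push_cast; ring
    have hbody : ∀ j : ℕ, (1 - q ^ (((k - (m + 1) : ℤ) : ℝ) + (j : ℝ))) /
        (1 - q ^ (((k - (m + 1) : ℤ) : ℝ) + (j : ℝ) + α)) = F2 j := by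
      intro j
      rw [hd1, hF2]
      congr 2
      · rw [Real.rpow_add hq0, Real.rpow_natCast, hW]
      · rw [show d - 1 + (j : ℝ) + α = d - 1 + α + (j : ℝ) by ring, Real.rpow_add hq0,
          Real.rpow_add hq0, Real.rpow_natCast, hW, hY]
    rw [tprod_congr hbody]
    have hsucc : Multipliable (fun n => F2 (n + 1)) := by
      have := myMultipliable q (W * q) (W * Y * q) hq0 hq1
      refine this.congr (fun n => ?_)
      rw [hF2]
      simp only [pow_succ]
      congr 1 <;> ring
    rw [tprod_eq_zero_mul' hsucc]
    have h20 : F2 0 = (1 - W) / (1 - W * Y) := by rw [hF2]; simp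
    have h2s : (∏' n, F2 (n + 1)) = P := by
      rw [hP]
      apply tprod_congr
      intro n
      rw [hF2, hF1]
      simp only [pow_succ]
      congr 1 <;> ring
    rw [h20, h2s]
  have e3 : qFacB q (α - 1) m k = q ^ ((m : ℝ) * (α - 1)) * (P * (1 - W * Y)⁻¹) := by
    rw [qFacB]
    congr 1
    have hbody : ∀ j : ℕ, (1 - q ^ (((k - m : ℤ) : ℝ) + (j : ℝ))) /
        (1 - q ^ (((k - m : ℤ) : ℝ) + (j : ℝ) + (α - 1))) = F3 j := by
      intro j
      rw [← hd, hF3]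
      congr 2
      · rw [show d + (j : ℝ) = d - 1 + 1 + (j : ℝ) by ring, Real.rpow_add hq0,
          Real.rpow_add hq0, Real.rpow_one, Real.rpow_natCast, hW]
      · rw [show d + (j : ℝ) + (α - 1) = d - 1 + α + (j : ℝ) by ring, Real.rpow_add hq0,
          Real.rpow_add hq0, Real.rpow_natCast, hW, hY]
    rw [tprod_congr hbody]
    have hsplit : ∀ j : ℕ, F3 j = F1 j * c j := by
      intro j
      simp only [hF1, hF3, hc]
      have h1 : (1 - W * Y * q * q ^ j) ≠ 0 := by
        rw [show 1 - W * Y * q * q ^ j = 1 - W * q * Y * q ^ j by ring]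
        exact hWqY j
      rw [div_mul_div_comm, div_eq_div_iff (hWY j) (mul_ne_zero (hWqY j) (hWY j))]
      ring
    rw [tprod_congr hsplit, hMF1.tprod_mul hMc, hP]
    congr 1
    have := myTelescope q (W * Y) hq0 hq1 hWY
    rw [← this]
  -- final algebra
  rw [e1, e2, e3]
  have hm1 : ((m + 1 : ℤ) : ℝ) * α = (m : ℝ) * α + α := by push_cast; ring
  rw [hm1, Real.rpow_add hq0, ← hY]
  rw [show (m : ℝ) * (α - 1) = (m : ℝ) * α - (m : ℝ) by ring, Real.rpow_sub hq0]
  have hq' : 1 - q ≠ 0 := by linarith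
  have hQm : q ^ ((m : ℝ)) ≠ 0 := (Real.rpow_pos_of_pos hq0 _).ne'
  have hWY0 : 1 - W * Y ≠ 0 := by have := hWY 0; simpa using this
  have hYW0 : 1 - Y * W ≠ 0 := by rw [mul_comm]; exact hWY0
  field_simp
  ring
end

section
/- Let q ∈ (0,1), let α be a real that is not an integer, and let m, k be integers with k ≥ m + 1. Then the nabla q-derivative of the q-factorial power with respect to its second variable satisfies [(q^m − q^k)_q^{α} − (q^m − q^{k+1})_q^{α}] / ((1 − q) q^k) = −((1 − q^{α})/(1 − q)) · (q^m − q^{k+1})_q^{α−1}. -/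
open Finset Real

noncomputable def auxA (q x : ℝ) (i : ℕ) : ℝ := 1 - q ^ (x + (i : ℝ))

lemma auxA_shift (q x : ℝ) (i j : ℕ) : auxA q x (i + j) = auxA q (x + (j : ℝ)) i := by
  unfold auxA
  congr 1
  push_cast
  ring

lemma auxA_zero (q x : ℝ) : auxA q x 0 = 1 - q ^ x := by simp [auxA]

lemma auxA_pos {q x : ℝ} (hq0 : 0 < q) (hq1 : q < 1) (hx : 0 < x) (i : ℕ) :
    0 < auxA q x i := by
  have : q ^ (x + (i : ℝ)) < 1 :=
    Real.rpow_lt_one hq0.le hq1 (by positivity)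
  simpa [auxA] using sub_pos.2 this

lemma summable_log_auxA {q x : ℝ} (hq0 : 0 < q) (hq1 : q < 1) (hx : 0 < x) :
    Summable fun i : ℕ => Real.log (auxA q x i) := by
  have hqx : q ^ x < 1 := Real.rpow_lt_one hq0.le hq1 hx
  have hqxpos : (0:ℝ) < q ^ x := Real.rpow_pos_of_pos hq0 x
  have ht : ∀ i : ℕ, q ^ (x + (i:ℝ)) ≤ q ^ x := fun i =>
    Real.rpow_le_rpow_of_exponent_ge hq0 hq1.le (le_add_of_nonneg_right (Nat.cast_nonneg i))
  have htpos : ∀ i : ℕ, (0:ℝ) < q ^ (x + (i:ℝ)) := fun i => Real.rpow_pos_of_pos hq0 _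
  have key : Summable fun i : ℕ => -Real.log (auxA q x i) := by
    refine Summable.of_nonneg_of_le ?_ ?_
      (((summable_geometric_of_lt_one hq0.le hq1).mul_left (q ^ x)).mul_left (1 - q ^ x)⁻¹)
    · intro i
      simp only [neg_nonneg, auxA]
      exact Real.log_nonpos (by nlinarith [ht i, htpos i]) (by nlinarith [htpos i])
    · intro i
      have h1 : 0 < 1 - q ^ (x + (i:ℝ)) := by nlinarith [ht i]
      have h2 : -Real.log (auxA q x i) = Real.log (1 - q ^ (x + (i:ℝ)))⁻¹ := by
        rw [Real.log_inv, auxA]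
      rw [h2]
      have h3 : Real.log (1 - q ^ (x + (i:ℝ)))⁻¹ ≤ (1 - q ^ (x + (i:ℝ)))⁻¹ - 1 :=
        Real.log_le_sub_one_of_pos (by positivity)
      have h4 : (1 - q ^ (x + (i:ℝ)))⁻¹ - 1 = q ^ (x + (i:ℝ)) / (1 - q ^ (x + (i:ℝ))) := by
        field_simp
        ring
      have h5 : q ^ (x + (i:ℝ)) / (1 - q ^ (x + (i:ℝ))) ≤ q ^ (x + (i:ℝ)) / (1 - q ^ x) :=
        div_le_div_of_nonneg_left (htpos i).le (by linarith) (by linarith [ht i])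
      have h6 : q ^ (x + (i:ℝ)) = q ^ x * q ^ i := by
        rw [Real.rpow_add hq0, Real.rpow_natCast]
      calc Real.log (1 - q ^ (x + (i:ℝ)))⁻¹ ≤ (1 - q ^ (x + (i:ℝ)))⁻¹ - 1 := h3
        _ = q ^ (x + (i:ℝ)) / (1 - q ^ (x + (i:ℝ))) := h4
        _ ≤ q ^ (x + (i:ℝ)) / (1 - q ^ x) := h5
        _ = (1 - q ^ x)⁻¹ * (q ^ x * q ^ i) := by rw [h6]; ring
  simpa using key.neg

lemma hasProd_auxA_div {q x y : ℝ} (hq0 : 0 < q) (hq1 : q < 1) (hx : 0 < x) (hy : 0 < y) :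
    HasProd (fun i : ℕ => auxA q x i / auxA q y i)
      (Real.exp ((∑' i : ℕ, Real.log (auxA q x i)) - ∑' i : ℕ, Real.log (auxA q y i))) := by
  have hx' := summable_log_auxA hq0 hq1 hx
  have hy' := summable_log_auxA hq0 hq1 hy
  have h := (hx'.hasSum.sub hy'.hasSum).rexp
  have e : (Real.exp ∘ fun i : ℕ => Real.log (auxA q x i) - Real.log (auxA q y i))
      = fun i : ℕ => auxA q x i / auxA q y i := funext fun i => by
    simp only [Function.comp_apply, Real.exp_sub,
      Real.exp_log (auxA_pos hq0 hq1 hx i), Real.exp_log (auxA_pos hq0 hq1 hy i)]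
  rwa [e] at h

lemma tprod_split {q : ℝ} (hq0 : 0 < q) (hq1 : q < 1) (x y : ℝ) (N : ℕ)
    (hx : 0 < x + (N:ℝ)) (hy : 0 < y + (N:ℝ)) :
    (∏' j : ℕ, (auxA q x j / auxA q y j))
      = (∏ i ∈ Finset.range N, (auxA q x i / auxA q y i)) *
        Real.exp ((∑' i : ℕ, Real.log (auxA q (x + (N:ℝ)) i))
          - ∑' i : ℕ, Real.log (auxA q (y + (N:ℝ)) i)) := by
  have h := hasProd_auxA_div (x := x + (N:ℝ)) (y := y + (N:ℝ)) hq0 hq1 hx hy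
  have e : (fun i : ℕ => auxA q (x + (N:ℝ)) i / auxA q (y + (N:ℝ)) i)
      = fun i : ℕ => auxA q x (i + N) / auxA q y (i + N) := funext fun i => by
    rw [auxA_shift, auxA_shift]
  rw [e] at h
  rw [← Multipliable.prod_mul_tprod_nat_mul' (f := fun j : ℕ => auxA q x j / auxA q y j) (k := N)
    h.multipliable, h.tprod_eq]

lemma tsum_log_succ {q x : ℝ} (hq0 : 0 < q) (hq1 : q < 1) (hx : 0 < x) :
    (∑' i : ℕ, Real.log (auxA q (x + 1) i))
      = (∑' i : ℕ, Real.log (auxA q x i)) - Real.log (1 - q ^ x) := by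
  have hs := summable_log_auxA hq0 hq1 hx
  have h0 := Summable.tsum_eq_zero_add hs
  have e : (fun b : ℕ => Real.log (auxA q x (b + 1)))
      = fun b : ℕ => Real.log (auxA q (x + 1) b) := funext fun b => by
    rw [auxA_shift q x b 1]; norm_num
  rw [e] at h0
  rw [auxA_zero] at h0
  linarith [h0]

lemma prod_auxA_succ (q x : ℝ) (N : ℕ) :
    (1 - q ^ x) * ∏ i ∈ Finset.range N, auxA q (x + 1) i
      = (∏ i ∈ Finset.range N, auxA q x i) * (1 - q ^ (x + (N:ℝ))) := by
  have h1 : ∀ i : ℕ, auxA q (x + 1) i = auxA q x (i + 1) := fun i => by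
    rw [auxA_shift q x i 1]; norm_num
  calc (1 - q ^ x) * ∏ i ∈ Finset.range N, auxA q (x + 1) i
      = (∏ i ∈ Finset.range N, auxA q x (i + 1)) * auxA q x 0 := by
        rw [auxA_zero, Finset.prod_congr rfl fun i _ => h1 i]; ring
    _ = ∏ i ∈ Finset.range (N + 1), auxA q x i := (Finset.prod_range_succ' _ _).symm
    _ = (∏ i ∈ Finset.range N, auxA q x i) * auxA q x N := Finset.prod_range_succ _ _
    _ = (∏ i ∈ Finset.range N, auxA q x i) * (1 - q ^ (x + (N:ℝ))) := rfl

lemma rpow_ne_one' {q y : ℝ} (hq0 : 0 < q) (hq1 : q < 1) (hy : y ≠ 0) : q ^ y ≠ 1 := by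
  rcases hy.lt_or_gt with h | h
  · have : q ^ (0:ℝ) < q ^ y := (Real.rpow_lt_rpow_left_iff_of_base_lt_one hq0 hq1).2 h
    rw [Real.rpow_zero] at this
    exact (ne_of_gt this)
  · have : q ^ y < q ^ (0:ℝ) := (Real.rpow_lt_rpow_left_iff_of_base_lt_one hq0 hq1).2 h
    rw [Real.rpow_zero] at this
    exact (ne_of_lt this)



/-- The nabla q-derivative of `s ↦ (q^m - s)_q^α` with respect to the second
variable at `s = q^k` equals `-[α]_q · (q^m - q^{k+1})_q^{α-1}`. -/
theorem qFac_nabla_second (q α : ℝ) (hq0 : 0 < q) (hq1 : q < 1)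
    (hα : ∀ z : ℤ, α ≠ (z : ℝ)) (m k : ℤ) (hk : m + 1 ≤ k) :
    (qFacB q α m k - qFacB q α m (k + 1)) / ((1 - q) * q ^ (k : ℝ)) =
      -(((1 - q ^ α) / (1 - q)) * qFacB q (α - 1) m (k + 1)) := by
  have hcast1 : ((k - m : ℤ) : ℝ) = (k : ℝ) - (m : ℝ) := by push_cast; ring
  have hcast2 : ((k + 1 - m : ℤ) : ℝ) = (k : ℝ) - (m : ℝ) + 1 := by push_cast; ring
  simp only [qFacB, hcast1, hcast2]
  set u : ℝ := (k : ℝ) - (m : ℝ) with hu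
  have hu1 : 1 ≤ u := by
    have : (m : ℝ) + 1 ≤ (k : ℝ) := by exact_mod_cast hk
    simp only [hu]; linarith
  set v : ℝ := u + α with hv
  -- rewrite the three tprods into auxA form
  have E1 : (∏' j : ℕ, (1 - q ^ (u + (j : ℝ))) / (1 - q ^ (u + (j : ℝ) + α)))
      = ∏' j : ℕ, (auxA q u j / auxA q v j) :=
    tprod_congr fun j => by
      unfold auxA
      rw [show u + (j : ℝ) + α = v + (j : ℝ) by rw [hv]; ring]
  have E2 : (∏' j : ℕ, (1 - q ^ (u + 1 + (j : ℝ))) / (1 - q ^ (u + 1 + (j : ℝ) + α)))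
      = ∏' j : ℕ, (auxA q (u + 1) j / auxA q (v + 1) j) :=
    tprod_congr fun j => by
      unfold auxA
      rw [show u + 1 + (j : ℝ) + α = v + 1 + (j : ℝ) by rw [hv]; ring]
  have E3 : (∏' j : ℕ, (1 - q ^ (u + 1 + (j : ℝ))) / (1 - q ^ (u + 1 + (j : ℝ) + (α - 1))))
      = ∏' j : ℕ, (auxA q (u + 1) j / auxA q v j) :=
    tprod_congr fun j => by
      unfold auxA
      rw [show u + 1 + (j : ℝ) + (α - 1) = v + (j : ℝ) by rw [hv]; ring]
  rw [E1, E2, E3]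
  -- choose a shift N making all exponents positive
  obtain ⟨N, hN⟩ := exists_nat_gt (-v)
  have hNn : (0:ℝ) ≤ (N : ℝ) := Nat.cast_nonneg N
  have hvN : 0 < v + (N : ℝ) := by linarith
  have huN : 0 < u + (N : ℝ) := by linarith
  rw [tprod_split hq0 hq1 u v N huN hvN,
      tprod_split hq0 hq1 (u + 1) (v + 1) N (by linarith) (by linarith),
      tprod_split hq0 hq1 (u + 1) v N (by linarith) hvN]
  rw [show u + 1 + (N : ℝ) = u + (N : ℝ) + 1 by ring,
      show v + 1 + (N : ℝ) = v + (N : ℝ) + 1 by ring,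
      tsum_log_succ hq0 hq1 huN, tsum_log_succ hq0 hq1 hvN]
  simp only [Finset.prod_div_distrib]
  -- abbreviations
  set SA := ∑' i : ℕ, Real.log (auxA q (u + (N : ℝ)) i) with hSA
  set SB := ∑' i : ℕ, Real.log (auxA q (v + (N : ℝ)) i) with hSB
  have hApos : (0:ℝ) < 1 - q ^ (u + (N : ℝ)) :=
    sub_pos.2 (Real.rpow_lt_one hq0.le hq1 huN)
  have hBpos : (0:ℝ) < 1 - q ^ (v + (N : ℝ)) :=
    sub_pos.2 (Real.rpow_lt_one hq0.le hq1 hvN)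
  have h2 : Real.exp ((SA - Real.log (1 - q ^ (u + (N:ℝ))))
        - (SB - Real.log (1 - q ^ (v + (N:ℝ)))))
      = Real.exp (SA - SB) * ((1 - q ^ (v + (N:ℝ))) / (1 - q ^ (u + (N:ℝ)))) := by
    rw [show (SA - Real.log (1 - q ^ (u + (N:ℝ)))) - (SB - Real.log (1 - q ^ (v + (N:ℝ))))
        = (SA - SB) + (Real.log (1 - q ^ (v + (N:ℝ))) - Real.log (1 - q ^ (u + (N:ℝ)))) by ring,
      Real.exp_add]
    congr 1
    rw [Real.exp_sub, Real.exp_log hApos, Real.exp_log hBpos]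
  have h3 : Real.exp ((SA - Real.log (1 - q ^ (u + (N:ℝ)))) - SB)
      = Real.exp (SA - SB) / (1 - q ^ (u + (N:ℝ))) := by
    rw [show (SA - Real.log (1 - q ^ (u + (N:ℝ)))) - SB
        = (SA - SB) - Real.log (1 - q ^ (u + (N:ℝ))) by ring,
      Real.exp_sub, Real.exp_log hApos]
  rw [h2, h3]
  set E := Real.exp (SA - SB) with hE
  have hEpos : 0 < E := Real.exp_pos _
  set PA := ∏ i ∈ Finset.range N, auxA q u i with hPA
  set PB := ∏ i ∈ Finset.range N, auxA q v i with hPB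
  set X := ∏ i ∈ Finset.range N, auxA q (u + 1) i with hX
  set Y := ∏ i ∈ Finset.range N, auxA q (v + 1) i with hY
  set AN := 1 - q ^ (u + (N:ℝ)) with hAN
  set BN := 1 - q ^ (v + (N:ℝ)) with hBN
  -- nonvanishing facts
  have hvne : ∀ i : ℕ, auxA q v i ≠ 0 := by
    intro i
    have hexp : v + (i : ℝ) ≠ 0 := by
      intro h
      apply hα (m - k - (i : ℤ))
      have : α = -(u + (i : ℝ)) := by
        rw [hv] at h; linarith
      rw [this, hu]; push_cast; ring
    have := rpow_ne_one' hq0 hq1 hexp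
    simp only [auxA]
    intro hcon
    exact this (by linarith [sub_eq_zero.1 hcon])
  have hPBne : PB ≠ 0 := Finset.prod_ne_zero_iff.2 fun i _ => hvne i
  have hPAne : PA ≠ 0 := Finset.prod_ne_zero_iff.2 fun i _ =>
    (auxA_pos hq0 hq1 (by linarith) i).ne'
  have hu0 : (0:ℝ) < u := by linarith
  have hA0pos : (0:ℝ) < 1 - q ^ u := sub_pos.2 (Real.rpow_lt_one hq0.le hq1 hu0)
  have hB0ne : (1:ℝ) - q ^ v ≠ 0 := by
    have := hvne 0
    rw [auxA_zero] at this
    exact this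
  -- telescoping for the finite products
  have hXe : (1 - q ^ u) * X = PA * AN := prod_auxA_succ q u N
  have hYe : (1 - q ^ v) * Y = PB * BN := prod_auxA_succ q v N
  -- rpow relations
  have hqu : q ^ u * q ^ (m : ℝ) = q ^ (k : ℝ) := by
    rw [← Real.rpow_add hq0]
    congr 1
    rw [hu]; ring
  have hqv : q ^ v = q ^ u * q ^ α := by
    rw [hv, Real.rpow_add hq0]
  have hqm : q ^ ((m : ℝ) * (α - 1)) * q ^ (m : ℝ) = q ^ ((m : ℝ) * α) := by
    rw [← Real.rpow_add hq0]
    congr 1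
    ring
  -- clear denominators and finish
  have hqK : (0:ℝ) < q ^ (k : ℝ) := Real.rpow_pos_of_pos hq0 _
  have hqM : (0:ℝ) < q ^ (m : ℝ) := Real.rpow_pos_of_pos hq0 _
  have hqU : (0:ℝ) < q ^ u := Real.rpow_pos_of_pos hq0 _
  have h1q : (0:ℝ) < 1 - q := by linarith
  have hYne : Y ≠ 0 := by
    intro h
    rw [h, mul_zero] at hYe
    exact (mul_ne_zero hPBne hBpos.ne') hYe.symm
  have hXval : X = PA * AN / (1 - q ^ u) := by
    field_simp at hXe ⊢
    linarith [hXe]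
  have hYval : Y = PB * BN / (1 - q ^ v) := by
    field_simp at hYe ⊢
    linarith [hYe]
  have hqm' : q ^ ((m : ℝ) * (α - 1)) = q ^ ((m : ℝ) * α) / q ^ (m : ℝ) :=
    (eq_div_iff hqM.ne').2 hqm
  have hB0ne' : (1:ℝ) - q ^ u * q ^ α ≠ 0 := by rw [← hqv]; exact hB0ne
  rw [hXval, hYval, hqv, ← hqu, hqm']
  have hANne : AN ≠ 0 := hApos.ne'
  have hBNne : BN ≠ 0 := hBpos.ne'
  field_simp
  ring
end

section
/- (Caputo version) Let q, α ∈ (0,1), let n0 be an integer, and let y : ℤ → ℝ encode a function on T_q. Suppose y(n0) ≥ 0 and, for every integer n < n0, Σ_{i=n}^{n0} (q^n − q^{i+1})_q^{−α} (y(i) − y(i+1)) ≥ −(q^n − q^{n0+1})_q^{−α} · y(n0+1) (this says that the Caputo q-fractional derivative of order α based at qa, a = q^{n0}, satisfies (_qC_{qa}^{α} y)(t) ≥ −((t − qa)_q^{−α}/Γ_q(1−α)) y(qa) at every t = q^n with n < n0). Then y is c_q(α)-increasing on {q^n : n ≤ n0}, i.e. y(n−1) ≥ c_q(α) · y(n)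 for every integer n ≤ n0. -/
namespace QFacAux

open Real

variable {q α : ℝ}

/-- The single factor of the infinite product. -/
noncomputable def R (q α x : ℝ) : ℝ := (1 - q ^ x) / (1 - q ^ (x - α))

/-- The infinite product part of `qFac`. -/
noncomputable def P (q α d : ℝ) : ℝ := ∏' j : ℕ, R q α (d + (j : ℝ))

lemma sub_pos'' (hq0 : 0 < q) (hq1 : q < 1) {x : ℝ} (hx : 0 < x) : 0 < 1 - q ^ x := by
  have := Real.rpow_lt_one hq0.le hq1 hx
  linarith

lemma one_le_R (hq0 : 0 < q) (hq1 : q < 1) (hα0 : 0 < α) {x : ℝ} (hx : α < x) :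
    1 ≤ R q α x := by
  have hd : 0 < 1 - q ^ (x - α) := sub_pos'' hq0 hq1 (by linarith)
  have h2 : q ^ x ≤ q ^ (x - α) := Real.rpow_le_rpow_of_exponent_ge hq0 hq1.le (by linarith)
  rw [R, le_div_iff₀ hd]
  linarith

lemma R_pos (hq0 : 0 < q) (hq1 : q < 1) (hα0 : 0 < α) {x : ℝ} (hx : α < x) :
    0 < R q α x := lt_of_lt_of_le one_pos (one_le_R hq0 hq1 hα0 hx)

lemma R_sub_one_le (hq0 : 0 < q) (hq1 : q < 1) (hα0 : 0 < α) (hα1 : α < 1)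
    {d : ℝ} (hd : 1 ≤ d) (j : ℕ) :
    R q α (d + (j : ℝ)) - 1 ≤ q ^ (d - α) / (1 - q ^ (d - α)) * q ^ j := by
  set x := d + (j : ℝ) with hxdef
  have hj0 : (0:ℝ) ≤ (j:ℝ) := Nat.cast_nonneg j
  have hαx : α < x := by simp only [hxdef]; linarith
  have hden0 : 0 < 1 - q ^ (d - α) := sub_pos'' hq0 hq1 (by linarith)
  have hdenx : 0 < 1 - q ^ (x - α) := sub_pos'' hq0 hq1 (by linarith)
  have hmono : q ^ (x - α) ≤ q ^ (d - α) :=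
    Real.rpow_le_rpow_of_exponent_ge hq0 hq1.le (by linarith)
  have hR1 : R q α x - 1 = (q ^ (x - α) - q ^ x) / (1 - q ^ (x - α)) := by
    rw [R]; field_simp; ring
  have hxpos : 0 < q ^ x := Real.rpow_pos_of_pos hq0 x
  have hsplit : q ^ (x - α) = q ^ (d - α) * q ^ j := by
    rw [← Real.rpow_natCast q j, ← Real.rpow_add hq0]
    congr 1
    simp only [hxdef]; ring
  calc R q α x - 1 = (q ^ (x - α) - q ^ x) / (1 - q ^ (x - α)) := hR1
    _ ≤ q ^ (x - α) / (1 - q ^ (d - α)) := by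
        apply div_le_div₀ (Real.rpow_pos_of_pos hq0 _).le (by linarith) hden0 (by linarith)
    _ = q ^ (d - α) / (1 - q ^ (d - α)) * q ^ j := by rw [hsplit]; ring

lemma multipliable_R (hq0 : 0 < q) (hq1 : q < 1) (hα0 : 0 < α) (hα1 : α < 1)
    {d : ℝ} (hd : 1 ≤ d) : Multipliable (fun j : ℕ => R q α (d + (j : ℝ))) := by
  have hpos : ∀ j : ℕ, 0 < R q α (d + (j : ℝ)) := fun j =>
    R_pos hq0 hq1 hα0 (by have : (0:ℝ) ≤ (j:ℝ) := Nat.cast_nonneg j; linarith)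
  refine Real.multipliable_of_summable_log hpos ?_
  apply Summable.of_nonneg_of_le
    (fun j => Real.log_nonneg (one_le_R hq0 hq1 hα0
      (by have : (0:ℝ) ≤ (j:ℝ) := Nat.cast_nonneg j; linarith)))
    (fun j => (Real.log_le_sub_one_of_pos (hpos j)).trans (R_sub_one_le hq0 hq1 hα0 hα1 hd j))
  exact (summable_geometric_of_lt_one hq0.le hq1).mul_left _

lemma P_shift (hq0 : 0 < q) (hq1 : q < 1) (hα0 : 0 < α) (hα1 : α < 1)
    {d : ℝ} (hd : 1 ≤ d) : P q α d = R q α d * P q α (d + 1) := by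
  have hm : Multipliable (fun j : ℕ => R q α (d + 1 + (j : ℝ))) :=
    multipliable_R hq0 hq1 hα0 hα1 (by linarith)
  have hm' : Multipliable (fun j : ℕ => R q α (d + ((j + 1 : ℕ) : ℝ))) := by
    apply hm.congr
    intro j; congr 1; push_cast; ring
  rw [P, tprod_eq_zero_mul' (f := fun j : ℕ => R q α (d + (j : ℝ))) hm']
  congr 1
  · norm_num
  · rw [P]
    apply tprod_congr
    intro j; congr 1; push_cast; ring

lemma one_le_P (hq0 : 0 < q) (hq1 : q < 1) (hα0 : 0 < α) {d : ℝ} (hd : α < d) :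
    1 ≤ P q α d := by
  by_cases hm : Multipliable (fun j : ℕ => R q α (d + (j : ℝ)))
  · refine ge_of_tendsto' hm.hasProd (fun s => ?_)
    calc (1:ℝ) = ∏ _i ∈ s, 1 := by simp
      _ ≤ ∏ i ∈ s, R q α (d + (i : ℝ)) := Finset.prod_le_prod (by simp) (fun i _ =>
          one_le_R hq0 hq1 hα0 (by have : (0:ℝ) ≤ (i:ℝ) := Nat.cast_nonneg i; linarith))
  · rw [P, tprod_eq_one_of_not_multipliable hm]

lemma P_pos (hq0 : 0 < q) (hq1 : q < 1) (hα0 : 0 < α) {d : ℝ} (hd : α < d) :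
    0 < P q α d := lt_of_lt_of_le one_pos (one_le_P hq0 hq1 hα0 hd)

lemma qFac_eq (m k : ℤ) : qFac q α m k = q ^ (-(m:ℝ) * α) * P q α ((k - m : ℤ) : ℝ) := rfl

section
variable (hq0 : 0 < q) (hq1 : q < 1) (hα0 : 0 < α) (hα1 : α < 1)
include hq0 hq1 hα0 hα1

lemma qFac_pos {n i : ℤ} (h : n ≤ i) : 0 < qFac q α n (i + 1) := by
  rw [qFac_eq]
  have hd : (1:ℝ) ≤ ((i + 1 - n : ℤ) : ℝ) := by
    have : (1:ℤ) ≤ i + 1 - n := by omega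
    exact_mod_cast this
  exact mul_pos (Real.rpow_pos_of_pos hq0 _) (P_pos hq0 hq1 hα0 (by linarith))

lemma qFac_dec {n i : ℤ} (h : n < i) : qFac q α n (i + 1) ≤ qFac q α n i := by
  rw [qFac_eq, qFac_eq]
  have hd : (1:ℝ) ≤ ((i - n : ℤ) : ℝ) := by
    have : (1:ℤ) ≤ i - n := by omega
    exact_mod_cast this
  have hcast : ((i + 1 - n : ℤ) : ℝ) = ((i - n : ℤ) : ℝ) + 1 := by push_cast; ring
  rw [hcast, P_shift hq0 hq1 hα0 hα1 hd]
  have h1 : 1 ≤ R q α ((i - n : ℤ) : ℝ) := one_le_R hq0 hq1 hα0 (by linarith)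
  have h2 : 0 < P q α (((i - n : ℤ) : ℝ) + 1) := P_pos hq0 hq1 hα0 (by linarith)
  have h3 : 0 < q ^ (-(n:ℝ) * α) := Real.rpow_pos_of_pos hq0 _
  have h4 : P q α (((i - n : ℤ) : ℝ) + 1) ≤ R q α ((i - n : ℤ) : ℝ) * P q α (((i - n : ℤ) : ℝ) + 1) :=
    le_mul_of_one_le_left h2.le h1
  exact mul_le_mul_of_nonneg_left h4 h3.le

lemma qFac_const (n : ℤ) :
    q ^ (1 - α) * (1 - q ^ α) / (1 - q) * qFac q α (n - 1) n
      = qFac q α (n - 1) n - qFac q α (n - 1) (n + 1) := by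
  rw [qFac_eq, qFac_eq]
  have hc1 : ((n - (n - 1) : ℤ) : ℝ) = 1 := by push_cast; ring
  have hc2 : ((n + 1 - (n - 1) : ℤ) : ℝ) = 2 := by push_cast; ring
  rw [hc1, hc2]
  have hP1 : P q α 1 = R q α 1 * P q α 2 := by
    have := P_shift hq0 hq1 hα0 hα1 (le_refl (1:ℝ))
    norm_num at this ⊢; exact this
  rw [hP1]
  have hkey : q ^ (1 - α) * (1 - q ^ α) / (1 - q) * R q α 1 = R q α 1 - 1 := by
    have hq1a : 0 < 1 - q ^ (1 - α) := sub_pos'' hq0 hq1 (by linarith)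
    have hqq : (0:ℝ) < 1 - q := by linarith
    have hmul : q ^ (1 - α) * q ^ α = q := by
      rw [← Real.rpow_add hq0]; norm_num
    rw [R]
    rw [Real.rpow_one]
    field_simp
    ring_nf
    nlinarith [hmul]
  have h3 : 0 < q ^ (-((n:ℝ) - 1) * α) := Real.rpow_pos_of_pos hq0 _
  push_cast
  linear_combination (q ^ (-((n:ℝ) - 1) * α) * P q α 2) * hkey

end

lemma sum_identity (q α : ℝ) (y : ℤ → ℝ) (n : ℤ) :
    ∀ m : ℤ, n ≤ m →
      ∑ i ∈ Finset.Icc n m, qFac q α n (i + 1) * (y i - y (i + 1))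
          + qFac q α n (m + 1) * y (m + 1)
        = qFac q α n (n + 1) * y n
          + ∑ i ∈ Finset.Icc (n + 1) m, (qFac q α n (i + 1) - qFac q α n i) * y i := by
  refine Int.le_induction ?_ ?_
  · rw [Finset.Icc_self, Finset.sum_singleton]
    rw [show Finset.Icc (n + 1) n = ∅ by apply Finset.Icc_eq_empty; omega]
    simp; ring
  · intro m hm ih
    have hins : Finset.Icc n (m + 1) = insert (m + 1) (Finset.Icc n m) := by
      ext x; simp only [Finset.mem_Icc, Finset.mem_insert]; omega
    have hins2 : Finset.Icc (n + 1) (m + 1) = insert (m + 1) (Finset.Icc (n + 1) m) := by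
      ext x; simp only [Finset.mem_Icc, Finset.mem_insert]; omega
    have hnot : (m + 1) ∉ Finset.Icc n m := by simp
    have hnot2 : (m + 1) ∉ Finset.Icc (n + 1) m := by simp
    rw [hins, hins2, Finset.sum_insert hnot, Finset.sum_insert hnot2]
    ring_nf at ih ⊢
    linarith [ih]

section
variable (hq0 : 0 < q) (hq1 : q < 1) (hα0 : 0 < α) (hα1 : α < 1)
  (n0 : ℤ) (y : ℤ → ℝ) (hy : 0 ≤ y n0)
  (hC : ∀ n : ℤ, n < n0 →
    -(qFac q α n (n0 + 1) * y (n0 + 1)) ≤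
      ∑ i ∈ Finset.Icc n n0, qFac q α n (i + 1) * (y i - y (i + 1)))
include hq0 hq1 hα0 hα1 hy hC

set_option linter.unusedSectionVars false

lemma key_ineq {n : ℤ} (hn : n < n0) :
    0 ≤ qFac q α n (n + 1) * y n
        + ∑ i ∈ Finset.Icc (n + 1) n0, (qFac q α n (i + 1) - qFac q α n i) * y i := by
  rw [← sum_identity q α y n n0 hn.le]
  have := hC n hn
  linarith

lemma y_nonneg : ∀ k : ℕ, 0 ≤ y (n0 - k) := by
  intro k
  induction k using Nat.strong_induction_on with
  | _ k ih =>
    rcases Nat.eq_zero_or_pos k with hk | hk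
    · subst hk; simpa using hy
    · set n : ℤ := n0 - k with hn
      have hnn0 : n < n0 := by omega
      have hkey := key_ineq hq0 hq1 hα0 hα1 n0 y hy hC hnn0
      have hsum : ∑ i ∈ Finset.Icc (n + 1) n0, (qFac q α n (i + 1) - qFac q α n i) * y i ≤ 0 := by
        apply Finset.sum_nonpos
        intro i hi
        rw [Finset.mem_Icc] at hi
        have h1 : qFac q α n (i + 1) - qFac q α n i ≤ 0 := by
          have := qFac_dec hq0 hq1 hα0 hα1 (show n < i by omega)
          linarith
        have h2 : 0 ≤ y i := by
          have hik : ((n0 - i).toNat : ℤ) = n0 - i := by omega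
          have : y i = y (n0 - (n0 - i).toNat) := by rw [hik]; congr 1; omega
          rw [this]
          exact ih (n0 - i).toNat (by omega)
        exact mul_nonpos_of_nonpos_of_nonneg h1 h2
      have hpos : 0 < qFac q α n (n + 1) := qFac_pos hq0 hq1 hα0 hα1 le_rfl
      nlinarith
end

end QFacAux

/-- Caputo version of the monotonicity theorem: if `y(a) ≥ 0` (with `a = q^{n0}`)
and the Caputo q-fractional derivative of order `α ∈ (0,1)` based at `qa` satisfies
`(_qC_{qa}^α y)(t) ≥ -((t - qa)_q^{-α}/Γ_q(1-α)) y(qa)` at every `t = q^n`, `n < n0`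
(multiplying through by `Γ_q(1-α) > 0`, this is the stated sum inequality),
then `y` is `c_q(α)`-increasing, where `c_q(α) = q^{1-α}(1-q^α)/(1-q)`. -/
theorem qFrac_monotone_caputo (q α : ℝ) (hq0 : 0 < q) (hq1 : q < 1)
    (hα0 : 0 < α) (hα1 : α < 1) (n0 : ℤ) (y : ℤ → ℝ)
    (hy : 0 ≤ y n0)
    (hC : ∀ n : ℤ, n < n0 →
      -(qFac q α n (n0 + 1) * y (n0 + 1)) ≤
        ∑ i ∈ Finset.Icc n n0, qFac q α n (i + 1) * (y i - y (i + 1))) :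
    ∀ n : ℤ, n ≤ n0 → q ^ (1 - α) * (1 - q ^ α) / (1 - q) * y n ≤ y (n - 1) := by
  open QFacAux in
  intro n hn
  have hyn : ∀ i : ℤ, i ≤ n0 → 0 ≤ y i := by
    intro i hi
    have hik : ((n0 - i).toNat : ℤ) = n0 - i := by omega
    have : y i = y (n0 - (n0 - i).toNat) := by rw [hik]; congr 1; omega
    rw [this]
    exact y_nonneg hq0 hq1 hα0 hα1 n0 y hy hC _
  have hkey := key_ineq hq0 hq1 hα0 hα1 n0 y hy hC (show n - 1 < n0 by omega)
  rw [show n - 1 + 1 = n by ring] at hkey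
  have hsum : (qFac q α (n - 1) n - qFac q α (n - 1) (n + 1)) * y n
      ≤ ∑ i ∈ Finset.Icc n n0, (qFac q α (n - 1) i - qFac q α (n - 1) (i + 1)) * y i := by
    apply Finset.single_le_sum (f := fun i => (qFac q α (n - 1) i - qFac q α (n - 1) (i + 1)) * y i)
    · intro i hi
      rw [Finset.mem_Icc] at hi
      apply mul_nonneg
      · have := qFac_dec hq0 hq1 hα0 hα1 (show n - 1 < i by omega)
        linarith
      · exact hyn i hi.2
    · rw [Finset.mem_Icc]; omega
  have hneg : ∑ i ∈ Finset.Icc n n0, (qFac q α (n - 1) (i + 1) - qFac q α (n - 1) i) * y i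
      = -∑ i ∈ Finset.Icc n n0, (qFac q α (n - 1) i - qFac q α (n - 1) (i + 1)) * y i := by
    rw [← Finset.sum_neg_distrib]
    apply Finset.sum_congr rfl
    intro i _; ring
  rw [hneg] at hkey
  have hconst := qFac_const hq0 hq1 hα0 hα1 n
  have hpos : 0 < qFac q α (n - 1) n := by
    have := qFac_pos hq0 hq1 hα0 hα1 (le_refl (n - 1))
    rwa [show n - 1 + 1 = n by ring] at this
  have h2 : (qFac q α (n - 1) n - qFac q α (n - 1) (n + 1)) * y n
      ≤ qFac q α (n - 1) n * y (n - 1) := by linarith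
  rw [← hconst] at h2
  exact (mul_le_mul_iff_right₀ hpos).mp (by linarith [h2] :
    qFac q α (n - 1) n * (q ^ (1 - α) * (1 - q ^ α) / (1 - q) * y n)
      ≤ qFac q α (n - 1) n * y (n - 1))
end

section
/- Let q, α ∈ (0,1), let n0 be an integer, and let y : ℤ → ℝ encode a function on T_q. Suppose y(n0) ≥ 0 and y is increasing, i.e. y(n−1) ≥ y(n) for every integer n ≤ n0. Then S_y(n) − S_y(n+1) ≥ 0 for every integer n < n0 (i.e. the Riemann q-fractional derivative (_q∇_{qa}^{α} y)(q^n) of order α based at qa, a = q^{n0}, is nonnegative at every point t = q^n with n < n0). -/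
/-- `S q α n0 y n = Σ_{i=n}^{n0} q^i (q^n - q^{i+1})_q^{-α} y(i)`; for `n = n0 + 1`
the range is empty, so `S q α n0 y (n0+1) = 0`.  The Riemann q-fractional derivative
of order `α` based at `qa = q^{n0+1}`, evaluated at `t = q^n`, is
`(S q α n0 y n - S q α n0 y (n+1)) / ((1-q) q^n Γ_q(1-α))`,
whose sign is that of `S q α n0 y n - S q α n0 y (n+1)`. -/
noncomputable def S (q α : ℝ) (n0 : ℤ) (y : ℤ → ℝ) (n : ℤ) : ℝ :=
  ∑ i ∈ Finset.Icc n n0, q ^ (i : ℝ) * qFac q α n (i + 1) * y i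

/-- Auxiliary: the infinite product `∏_{j≥0} (1-q^{d+j})/(1-q^{d+j-α})`. -/
noncomputable def Pq (q α : ℝ) (d : ℝ) : ℝ :=
  ∏' j : ℕ, (1 - q ^ (d + (j : ℝ))) / (1 - q ^ (d + (j : ℝ) - α))

lemma qFac_eq (q α : ℝ) (m k : ℤ) :
    qFac q α m k = q ^ (-(m : ℝ) * α) * Pq q α ((k - m : ℤ) : ℝ) := rfl

section aux

variable {q α : ℝ}

lemma fac_den_pos (hq0 : 0 < q) (hq1 : q < 1) {x : ℝ} (hx : 0 < x) : 0 < 1 - q ^ x := by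
  have := Real.rpow_lt_one hq0.le hq1 hx
  linarith

lemma one_le_fac (hq0 : 0 < q) (hq1 : q < 1) (hα0 : 0 < α) {x : ℝ} (hx : α < x) :
    1 ≤ (1 - q ^ x) / (1 - q ^ (x - α)) := by
  have h1 : 0 < 1 - q ^ (x - α) := fac_den_pos hq0 hq1 (by linarith)
  rw [le_div_iff₀ h1, one_mul]
  have : q ^ x ≤ q ^ (x - α) :=
    Real.rpow_le_rpow_of_exponent_ge hq0 hq1.le (by linarith)
  linarith

lemma fac_pos (hq0 : 0 < q) (hq1 : q < 1) (hα0 : 0 < α) {x : ℝ} (hx : α < x) :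
    0 < (1 - q ^ x) / (1 - q ^ (x - α)) :=
  lt_of_lt_of_le one_pos (one_le_fac hq0 hq1 hα0 hx)

lemma summable_log_fac (hq0 : 0 < q) (hq1 : q < 1) (hα0 : 0 < α) {d : ℝ} (hd : α < d) :
    Summable (fun j : ℕ =>
      Real.log ((1 - q ^ (d + (j : ℝ))) / (1 - q ^ (d + (j : ℝ) - α)))) := by
  have hden : 0 < 1 - q ^ (d - α) := fac_den_pos hq0 hq1 (by linarith)
  have hx : ∀ j : ℕ, α < d + (j : ℝ) := fun j => by
    have : (0:ℝ) ≤ (j : ℝ) := Nat.cast_nonneg j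
    linarith
  refine Summable.of_nonneg_of_le
    (fun j => Real.log_nonneg (one_le_fac hq0 hq1 hα0 (hx j)))
    (fun j => ?_)
    (Summable.mul_left (q ^ (d - α) / (1 - q ^ (d - α)))
      (summable_geometric_of_lt_one hq0.le hq1))
  have hdj : 0 < 1 - q ^ (d + (j : ℝ) - α) := fac_den_pos hq0 hq1 (by
    have : (0:ℝ) ≤ (j : ℝ) := Nat.cast_nonneg j
    linarith)
  have hfp : 0 < (1 - q ^ (d + (j : ℝ))) / (1 - q ^ (d + (j : ℝ) - α)) :=
    fac_pos hq0 hq1 hα0 (hx j)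
  calc
    Real.log ((1 - q ^ (d + (j : ℝ))) / (1 - q ^ (d + (j : ℝ) - α)))
        ≤ (1 - q ^ (d + (j : ℝ))) / (1 - q ^ (d + (j : ℝ) - α)) - 1 :=
      Real.log_le_sub_one_of_pos hfp
    _ = (q ^ (d + (j : ℝ) - α) - q ^ (d + (j : ℝ))) / (1 - q ^ (d + (j : ℝ) - α)) := by
      field_simp
      ring
    _ ≤ q ^ (d + (j : ℝ) - α) / (1 - q ^ (d - α)) := by
      apply div_le_div₀ (Real.rpow_pos_of_pos hq0 _).le
      · have : (0:ℝ) < q ^ (d + (j : ℝ)) := Real.rpow_pos_of_pos hq0 _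
        linarith
      · exact hden
      · have : q ^ (d + (j : ℝ) - α) ≤ q ^ (d - α) :=
          Real.rpow_le_rpow_of_exponent_ge hq0 hq1.le (by
            have : (0:ℝ) ≤ (j : ℝ) := Nat.cast_nonneg j
            linarith)
        linarith
    _ = q ^ (d - α) / (1 - q ^ (d - α)) * q ^ j := by
      rw [show d + (j : ℝ) - α = (d - α) + (j : ℝ) by ring, Real.rpow_add hq0,
        Real.rpow_natCast]
      ring

lemma hasProd_fac (hq0 : 0 < q) (hq1 : q < 1) (hα0 : 0 < α) {d : ℝ} (hd : α < d) :
    HasProd (fun j : ℕ => (1 - q ^ (d + (j : ℝ))) / (1 - q ^ (d + (j : ℝ) - α)))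
      (Real.exp (∑' j : ℕ,
        Real.log ((1 - q ^ (d + (j : ℝ))) / (1 - q ^ (d + (j : ℝ) - α))))) := by
  have hx : ∀ j : ℕ, α < d + (j : ℝ) := fun j => by
    have : (0:ℝ) ≤ (j : ℝ) := Nat.cast_nonneg j
    linarith
  have h := (summable_log_fac hq0 hq1 hα0 hd).hasSum.rexp
  refine h.congr_fun fun j => ?_
  simp only [Function.comp_apply]
  exact (Real.exp_log (fac_pos hq0 hq1 hα0 (hx j))).symm

lemma multipliable_fac (hq0 : 0 < q) (hq1 : q < 1) (hα0 : 0 < α) {d : ℝ} (hd : α < d) :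
    Multipliable (fun j : ℕ => (1 - q ^ (d + (j : ℝ))) / (1 - q ^ (d + (j : ℝ) - α))) :=
  ⟨_, hasProd_fac hq0 hq1 hα0 hd⟩

lemma one_le_Pq (hq0 : 0 < q) (hq1 : q < 1) (hα0 : 0 < α) {d : ℝ} (hd : α < d) : 1 ≤ Pq q α d := by
  have h := (hasProd_fac hq0 hq1 hα0 hd).tprod_eq
  have h2 : Pq q α d = Real.exp (∑' j : ℕ,
      Real.log ((1 - q ^ (d + (j : ℝ))) / (1 - q ^ (d + (j : ℝ) - α)))) := h
  rw [h2]
  refine Real.one_le_exp (tsum_nonneg fun j => Real.log_nonneg (one_le_fac hq0 hq1 hα0 ?_))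
  have : (0:ℝ) ≤ (j : ℝ) := Nat.cast_nonneg j
  linarith

lemma Pq_shift (hq0 : 0 < q) (hq1 : q < 1) (hα0 : 0 < α) {d : ℝ} (hd : α < d) :
    Pq q α d = (1 - q ^ d) / (1 - q ^ (d - α)) * Pq q α (d + 1) := by
  have hm : Multipliable (fun j : ℕ =>
      (1 - q ^ (d + ((j + 1 : ℕ) : ℝ))) / (1 - q ^ (d + ((j + 1 : ℕ) : ℝ) - α))) := by
    refine (multipliable_fac hq0 hq1 hα0 (show α < d + 1 by linarith)).congr fun j => ?_
    have h1 : d + 1 + (j : ℝ) = d + ((j + 1 : ℕ) : ℝ) := by push_cast; ring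
    rw [h1]
  have h0 := tprod_eq_zero_mul'
    (f := fun j : ℕ => (1 - q ^ (d + (j : ℝ))) / (1 - q ^ (d + (j : ℝ) - α))) hm
  rw [Pq, h0]
  congr 1
  · norm_num
  · rw [Pq]
    exact tprod_congr fun j => by
      have h1 : d + ((j + 1 : ℕ) : ℝ) = d + 1 + (j : ℝ) := by push_cast; ring
      simp only [h1]

lemma Pq_nonneg (hq0 : 0 < q) (hq1 : q < 1) (hα0 : 0 < α) {d : ℝ} (hd : α < d) : 0 ≤ Pq q α d :=
  le_trans zero_le_one (one_le_Pq hq0 hq1 hα0 hd)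

lemma Pq_antitone (hq0 : 0 < q) (hq1 : q < 1) (hα0 : 0 < α) {d : ℝ} (hd : α < d) : Pq q α (d + 1) ≤ Pq q α d := by
  rw [Pq_shift hq0 hq1 hα0 hd]
  have h1 : 1 ≤ (1 - q ^ d) / (1 - q ^ (d - α)) := one_le_fac hq0 hq1 hα0 hd
  have h2 : 0 ≤ Pq q α (d + 1) := Pq_nonneg hq0 hq1 hα0 (by linarith)
  nlinarith

/-- The core scalar identity. -/
lemma core_identity (hq0 : 0 < q) (hq1 : q < 1) {δ : ℝ} (hδ : α < δ) :
    q ^ δ * (1 - q ^ (-α) * ((1 - q ^ δ) / (1 - q ^ (δ - α))))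
      = 1 - (1 - q ^ δ) / (1 - q ^ (δ - α)) := by
  have hden : 0 < 1 - q ^ (δ - α) := fac_den_pos hq0 hq1 (by linarith)
  have hAC : q ^ (δ - α) = q ^ δ * q ^ (-α) := by
    rw [show δ - α = δ + (-α) by ring, Real.rpow_add hq0]
  rw [hAC] at hden ⊢
  have hne : 1 - q ^ δ * q ^ (-α) ≠ 0 := hden.ne'
  field_simp
  ring

/-- Per-term formula for `i ≥ n+1`. -/
lemma term_eq (hq0 : 0 < q) (hq1 : q < 1) (hα0 : 0 < α) (hα1 : α < 1) (n i : ℤ) (hi : n + 1 ≤ i) :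
    q ^ ((i : ℤ) : ℝ) * qFac q α n (i + 1) - q ^ ((i : ℤ) : ℝ) * qFac q α (n + 1) (i + 1)
      = q ^ ((n : ℝ) * (1 - α)) *
        (Pq q α ((i : ℝ) + 1 - (n : ℝ)) - Pq q α ((i : ℝ) - (n : ℝ))) := by
  set δ : ℝ := (i : ℝ) - (n : ℝ) with hδdef
  have hδ1 : 1 ≤ δ := by
    have : (n : ℝ) + 1 ≤ (i : ℝ) := by exact_mod_cast hi
    simp only [hδdef]; linarith
  have hαδ : α < δ := lt_of_lt_of_le hα1 hδ1
  rw [qFac_eq, qFac_eq]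
  have e1 : ((i + 1 - n : ℤ) : ℝ) = δ + 1 := by push_cast; simp only [hδdef]; ring
  have e2 : ((i + 1 - (n + 1) : ℤ) : ℝ) = δ := by push_cast; simp only [hδdef]; ring
  have e3 : ((i : ℝ) + 1 - (n : ℝ)) = δ + 1 := by simp only [hδdef]; ring
  rw [e1, e2, e3, Pq_shift hq0 hq1 hα0 hαδ]
  have key := core_identity hq0 hq1 (α := α) hαδ
  have hi' : ((i : ℤ) : ℝ) = (n : ℝ) + δ := by simp only [hδdef]; ring
  have hsplit1 : q ^ ((i : ℤ) : ℝ) = q ^ ((n : ℝ)) * q ^ δ := by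
    rw [hi', Real.rpow_add hq0]
  have hsplit2 : q ^ ((n : ℝ) * (1 - α)) = q ^ ((n : ℝ)) * q ^ (-(n : ℝ) * α) := by
    rw [show (n : ℝ) * (1 - α) = (n : ℝ) + (-(n : ℝ) * α) by ring, Real.rpow_add hq0]
  have hsplit3 : q ^ (-(((n + 1) : ℤ) : ℝ) * α) = q ^ (-(n : ℝ) * α) * q ^ (-α) := by
    rw [show (-(((n + 1) : ℤ) : ℝ) * α) = (-(n : ℝ) * α) + (-α) by push_cast; ring,
      Real.rpow_add hq0]
  rw [hsplit1, hsplit2, hsplit3]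
  linear_combination (q ^ ((n : ℝ)) * q ^ (-(n : ℝ) * α) * Pq q α (δ + 1)) * key

/-- Telescoping sum over an integer interval. -/
lemma telescope (f : ℝ → ℝ) (a : ℤ) : ∀ b : ℤ, a ≤ b →
    ∑ i ∈ Finset.Icc a b, (f ((i : ℝ) + 1) - f ((i : ℝ)))
      = f ((b : ℝ) + 1) - f ((a : ℝ)) := by
  intro b
  refine Int.le_induction (motive := fun b _ => ∑ i ∈ Finset.Icc a b,
    (f ((i : ℝ) + 1) - f ((i : ℝ))) = f ((b : ℝ) + 1) - f ((a : ℝ))) ?_ ?_ b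
  · simp
  · intro b hb ih
    have hins : Finset.Icc a (b + 1) = insert (b + 1) (Finset.Icc a b) := by
      ext x
      simp only [Finset.mem_Icc, Finset.mem_insert]
      omega
    rw [hins, Finset.sum_insert (by simp), ih]
    push_cast
    ring

end aux

/-- If `y(a) ≥ 0` (with `a = q^{n0}`) and `y` is increasing on `T_q`
(i.e. `y(q^{n-1}) ≥ y(q^n)`, since `q^n` decreases as `n` increases), then the
Riemann q-fractional derivative of order `α ∈ (0,1)` based at `qa` is nonnegative
at every `t = q^n`, `n < n0`. -/
theorem qFrac_nonneg_of_increasing (q α : ℝ) (hq0 : 0 < q) (hq1 : q < 1)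
    (hα0 : 0 < α) (hα1 : α < 1) (n0 : ℤ) (y : ℤ → ℝ)
    (hy : 0 ≤ y n0)
    (hinc : ∀ n : ℤ, n ≤ n0 → y n ≤ y (n - 1)) :
    ∀ n : ℤ, n < n0 → 0 ≤ S q α n0 y n - S q α n0 y (n + 1) := by
  intro n hn
  have hn1 : n + 1 ≤ n0 := hn
  -- y is antitone up to n0
  have hyd : ∀ b : ℤ, n ≤ b → b ≤ n0 → y b ≤ y n := by
    intro b
    refine Int.le_induction (motive := fun b _ => b ≤ n0 → y b ≤ y n) ?_ ?_ b
    · intro _; exact le_rfl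
    · intro b hb ih hb0
      have h1 : y (b + 1) ≤ y b := by
        have := hinc (b + 1) hb0
        simpa using this
      exact h1.trans (ih (by omega))
  have hyn : 0 ≤ y n := le_trans hy (hyd n0 hn.le le_rfl)
  set D : ℝ := q ^ ((n : ℝ) * (1 - α)) with hD
  have hD0 : 0 < D := Real.rpow_pos_of_pos hq0 _
  -- split off the first term of S n
  have hsplit : S q α n0 y n = q ^ ((n : ℤ) : ℝ) * qFac q α n (n + 1) * y n
      + ∑ i ∈ Finset.Icc (n + 1) n0, q ^ ((i : ℤ) : ℝ) * qFac q α n (i + 1) * y i := by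
    rw [S, show Finset.Icc n n0 = insert n (Finset.Icc (n + 1) n0) from by
      ext x; simp only [Finset.mem_Icc, Finset.mem_insert]; omega,
      Finset.sum_insert (by simp)]
  have hS1 : S q α n0 y (n + 1)
      = ∑ i ∈ Finset.Icc (n + 1) n0, q ^ ((i : ℤ) : ℝ) * qFac q α (n + 1) (i + 1) * y i := rfl
  -- first term rewrite
  have hterm0 : q ^ ((n : ℤ) : ℝ) * qFac q α n (n + 1) = D * Pq q α 1 := by
    rw [qFac_eq, show ((n + 1 - n : ℤ) : ℝ) = 1 by push_cast; ring, hD,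
      show (n : ℝ) * (1 - α) = (n : ℝ) + (-(n : ℝ) * α) by ring, Real.rpow_add hq0]
    ring
  -- bound the summands
  have hbound : ∀ i ∈ Finset.Icc (n + 1) n0,
      D * (Pq q α ((i : ℝ) + 1 - (n : ℝ)) - Pq q α ((i : ℝ) - (n : ℝ))) * y n
        ≤ q ^ ((i : ℤ) : ℝ) * qFac q α n (i + 1) * y i
          - q ^ ((i : ℤ) : ℝ) * qFac q α (n + 1) (i + 1) * y i := by
    intro i hi
    rw [Finset.mem_Icc] at hi
    have hterm := term_eq hq0 hq1 hα0 hα1 n i hi.1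
    have hδ1 : (1 : ℝ) ≤ (i : ℝ) - (n : ℝ) := by
      have : (n : ℝ) + 1 ≤ (i : ℝ) := by exact_mod_cast hi.1
      linarith
    have hαδ : α < (i : ℝ) - (n : ℝ) := lt_of_lt_of_le hα1 hδ1
    have hPmono : Pq q α ((i : ℝ) - (n : ℝ) + 1) ≤ Pq q α ((i : ℝ) - (n : ℝ)) :=
      Pq_antitone hq0 hq1 hα0 hαδ
    have harg : (i : ℝ) + 1 - (n : ℝ) = (i : ℝ) - (n : ℝ) + 1 := by ring
    have hcoef : D * (Pq q α ((i : ℝ) + 1 - (n : ℝ)) - Pq q α ((i : ℝ) - (n : ℝ))) ≤ 0 := by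
      rw [harg]
      nlinarith
    have hyi : y i ≤ y n := hyd i (by omega) hi.2
    calc
      D * (Pq q α ((i : ℝ) + 1 - (n : ℝ)) - Pq q α ((i : ℝ) - (n : ℝ))) * y n
          ≤ D * (Pq q α ((i : ℝ) + 1 - (n : ℝ)) - Pq q α ((i : ℝ) - (n : ℝ))) * y i :=
        mul_le_mul_of_nonpos_left hyi hcoef
      _ = (q ^ ((i : ℤ) : ℝ) * qFac q α n (i + 1)
            - q ^ ((i : ℤ) : ℝ) * qFac q α (n + 1) (i + 1)) * y i := by rw [← hterm]
      _ = q ^ ((i : ℤ) : ℝ) * qFac q α n (i + 1) * y i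
            - q ^ ((i : ℤ) : ℝ) * qFac q α (n + 1) (i + 1) * y i := by ring
  -- telescoping value of the sum of coefficients
  have htel : ∑ i ∈ Finset.Icc (n + 1) n0,
      (Pq q α ((i : ℝ) + 1 - (n : ℝ)) - Pq q α ((i : ℝ) - (n : ℝ)))
        = Pq q α ((n0 : ℝ) + 1 - (n : ℝ)) - Pq q α 1 := by
    have := telescope (fun x => Pq q α (x - (n : ℝ))) (n + 1) n0 hn1
    rw [this]
    norm_num
  -- put it together
  have hsum : ∑ i ∈ Finset.Icc (n + 1) n0,
        D * (Pq q α ((i : ℝ) + 1 - (n : ℝ)) - Pq q α ((i : ℝ) - (n : ℝ))) * y n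
      ≤ ∑ i ∈ Finset.Icc (n + 1) n0,
        (q ^ ((i : ℤ) : ℝ) * qFac q α n (i + 1) * y i
          - q ^ ((i : ℤ) : ℝ) * qFac q α (n + 1) (i + 1) * y i) :=
    Finset.sum_le_sum hbound
  have hsumval : ∑ i ∈ Finset.Icc (n + 1) n0,
        D * (Pq q α ((i : ℝ) + 1 - (n : ℝ)) - Pq q α ((i : ℝ) - (n : ℝ))) * y n
      = D * (Pq q α ((n0 : ℝ) + 1 - (n : ℝ)) - Pq q α 1) * y n := by
    rw [← Finset.sum_mul, ← Finset.mul_sum, htel]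
  have hPbig : 0 ≤ Pq q α ((n0 : ℝ) + 1 - (n : ℝ)) := by
    refine Pq_nonneg hq0 hq1 hα0 ?_
    have : (n : ℝ) + 1 ≤ (n0 : ℝ) := by exact_mod_cast hn1
    linarith
  have hfinal : 0 ≤ D * Pq q α ((n0 : ℝ) + 1 - (n : ℝ)) * y n := by positivity
  have hdiff : S q α n0 y n - S q α n0 y (n + 1)
      = q ^ ((n : ℤ) : ℝ) * qFac q α n (n + 1) * y n
        + ∑ i ∈ Finset.Icc (n + 1) n0,
          (q ^ ((i : ℤ) : ℝ) * qFac q α n (i + 1) * y i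
            - q ^ ((i : ℤ) : ℝ) * qFac q α (n + 1) (i + 1) * y i) := by
    rw [hsplit, hS1, Finset.sum_sub_distrib]
    ring
  rw [hdiff, hterm0]
  have : D * Pq q α 1 * y n
      + D * (Pq q α ((n0 : ℝ) + 1 - (n : ℝ)) - Pq q α 1) * y n
      = D * Pq q α ((n0 : ℝ) + 1 - (n : ℝ)) * y n := by ring
  linarith [hsum, hsumval.symm.le, hsumval.le]
end

section
/- Let q, α ∈ (0,1), let n0 be an integer, and let y : ℤ → ℝ encode a function on T_q. Suppose y(n0) ≤ 0 and y is decreasing, i.e. y(n−1) ≤ y(n) for every integer n ≤ n0. Then S_y(n) − S_y(n+1) ≤ 0 for every integer n < n0 (i.e. the Riemann q-fractional derivative (_q∇_{qa}^{α} y)(q^n) of order α based at qa, a = q^{n0}, is nonpositive at every point t = q^n with n < n0). -/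
open Finset Filter Topology

namespace QFracAux

/-- factor function for the products -/
noncomputable def Qf (q c d : ℝ) : ℕ → ℝ :=
  fun j => (1 - q ^ (c + (j : ℝ))) / (1 - q ^ (d + (j : ℝ)))

noncomputable def Qp (q c d : ℝ) : ℝ := ∏' j : ℕ, Qf q c d j

variable {q : ℝ}

lemma one_sub_pos (hq0 : 0 < q) (hq1 : q < 1) {e : ℝ} (he : 0 < e) :
    0 < 1 - q ^ e := by
  have := Real.rpow_lt_one hq0.le hq1 he
  linarith

lemma exp_pos {c : ℝ} (hc : 0 < c) (j : ℕ) : (0:ℝ) < c + (j:ℝ) := by positivity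

lemma Qf_nonneg (hq0 : 0 < q) (hq1 : q < 1) {c d : ℝ} (hc : 0 < c) (hd : 0 < d)
    (j : ℕ) : 0 ≤ Qf q c d j :=
  div_nonneg (one_sub_pos hq0 hq1 (exp_pos hc j)).le
    (one_sub_pos hq0 hq1 (exp_pos hd j)).le

lemma Qf_le_one (hq0 : 0 < q) (hq1 : q < 1) {c d : ℝ} (hd : 0 < d)
    (hcd : c ≤ d) (j : ℕ) : Qf q c d j ≤ 1 := by
  rw [Qf, div_le_one (one_sub_pos hq0 hq1 (exp_pos hd j))]
  have := Real.rpow_le_rpow_of_exponent_ge hq0 hq1.le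
    (by linarith : d + (j:ℝ) ≥ c + (j:ℝ))
  linarith

lemma multipliable_of_le_one {f : ℕ → ℝ} (h0 : ∀ j, 0 ≤ f j) (h1 : ∀ j, f j ≤ 1) :
    Multipliable f := by
  have hant : Antitone (fun s : Finset ℕ => ∏ j ∈ s, f j) := by
    intro s t hst
    simp only
    rw [← Finset.prod_sdiff hst]
    exact mul_le_of_le_one_left (Finset.prod_nonneg fun i _ => h0 i)
      (Finset.prod_le_one (fun i _ => h0 i) (fun i _ => h1 i))
  have hbdd : BddBelow (Set.range fun s : Finset ℕ => ∏ j ∈ s, f j) := by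
    refine ⟨0, ?_⟩
    rintro x ⟨s, rfl⟩
    exact Finset.prod_nonneg fun i _ => h0 i
  exact ⟨_, tendsto_atTop_ciInf hant hbdd⟩

lemma multipliable_of_one_le {f : ℕ → ℝ} (h1 : ∀ j, 1 ≤ f j) (C : ℝ)
    (hC : ∀ N, ∏ j ∈ range N, f j ≤ C) : Multipliable f := by
  have hmono : Monotone (fun s : Finset ℕ => ∏ j ∈ s, f j) := by
    intro s t hst
    simp only
    rw [← Finset.prod_sdiff hst]
    refine le_mul_of_one_le_left (Finset.prod_nonneg fun i _ => by linarith [h1 i]) ?_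
    calc (1:ℝ) = ∏ _j ∈ t \ s, 1 := by simp
    _ ≤ ∏ j ∈ t \ s, f j :=
      Finset.prod_le_prod (fun i _ => zero_le_one) (fun i _ => h1 i)
  have hbdd : BddAbove (Set.range fun s : Finset ℕ => ∏ j ∈ s, f j) := by
    refine ⟨C, ?_⟩
    rintro x ⟨s, rfl⟩
    obtain ⟨N, hN⟩ := s.exists_nat_subset_range
    exact le_trans (hmono hN) (hC N)
  exact ⟨_, tendsto_atTop_ciSup hmono hbdd⟩

lemma mult_Q (hq0 : 0 < q) (hq1 : q < 1) {c d : ℝ} (hc : 0 < c) (hd : 0 < d)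
    (hcd : c ≤ d) : Multipliable (Qf q c d) :=
  multipliable_of_le_one (Qf_nonneg hq0 hq1 hc hd) (Qf_le_one hq0 hq1 hd hcd)

lemma tprod_nonneg {f : ℕ → ℝ} (h : ∀ j, 0 ≤ f j) : 0 ≤ ∏' j, f j := by
  by_cases hm : Multipliable f
  · exact ge_of_tendsto' hm.hasProd (fun s => Finset.prod_nonneg fun i _ => h i)
  · rw [tprod_eq_one_of_not_multipliable hm]; norm_num

lemma Qp_nonneg (hq0 : 0 < q) (hq1 : q < 1) {c d : ℝ} (hc : 0 < c) (hd : 0 < d) :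
    0 ≤ Qp q c d :=
  tprod_nonneg (Qf_nonneg hq0 hq1 hc hd)

lemma prod_range_tel (hq0 : 0 < q) (hq1 : q < 1) {d : ℝ} (hd : 0 < d) (N : ℕ) :
    ∏ j ∈ range N, (1 - q ^ (d + 1 + (j:ℝ))) / (1 - q ^ (d + (j:ℝ)))
      = (1 - q ^ (d + (N:ℝ))) / (1 - q ^ d) := by
  induction N with
  | zero =>
    simp only [Finset.prod_range_zero, Nat.cast_zero, add_zero]
    rw [div_self (one_sub_pos hq0 hq1 hd).ne']
  | succ N ih =>
    rw [Finset.prod_range_succ, ih]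
    have h1 : (0:ℝ) < 1 - q ^ (d + (N:ℝ)) := one_sub_pos hq0 hq1 (by positivity)
    have h2 : (0:ℝ) < 1 - q ^ d := one_sub_pos hq0 hq1 hd
    rw [show d + ((N+1:ℕ):ℝ) = d + 1 + (N:ℝ) by push_cast; ring]
    field_simp

lemma hasProd_tel (hq0 : 0 < q) (hq1 : q < 1) {d : ℝ} (hd : 0 < d) :
    HasProd (fun j : ℕ => (1 - q ^ (d + 1 + (j:ℝ))) / (1 - q ^ (d + (j:ℝ))))
      (1 - q ^ d)⁻¹ := by
  have hone_le : ∀ j : ℕ, (1:ℝ) ≤ (1 - q ^ (d + 1 + (j:ℝ))) / (1 - q ^ (d + (j:ℝ))) := by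
    intro j
    rw [le_div_iff₀ (one_sub_pos hq0 hq1 (exp_pos hd j))]
    have := Real.rpow_le_rpow_of_exponent_ge hq0 hq1.le
      (by linarith : d + (j:ℝ) ≤ d + 1 + (j:ℝ))
    linarith
  have hm : Multipliable (fun j : ℕ => (1 - q ^ (d + 1 + (j:ℝ))) / (1 - q ^ (d + (j:ℝ)))) := by
    refine multipliable_of_one_le hone_le (1 - q ^ d)⁻¹ (fun N => ?_)
    rw [prod_range_tel hq0 hq1 hd N]
    have h2 : (0:ℝ) < 1 - q ^ d := one_sub_pos hq0 hq1 hd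
    rw [div_le_iff₀ h2, inv_mul_cancel₀ h2.ne']
    have : (0:ℝ) < q ^ (d + (N:ℝ)) := Real.rpow_pos_of_pos hq0 _
    linarith
  rw [hm.hasProd_iff_tendsto_nat]
  have heq : (fun N : ℕ => ∏ j ∈ range N,
      (1 - q ^ (d + 1 + (j:ℝ))) / (1 - q ^ (d + (j:ℝ))))
      = fun N : ℕ => (1 - q ^ d * q ^ (N:ℕ)) / (1 - q ^ d) := by
    funext N
    rw [prod_range_tel hq0 hq1 hd N, Real.rpow_add hq0, Real.rpow_natCast]
  rw [heq]
  have hlim : Tendsto (fun N : ℕ => (q:ℝ) ^ (N:ℕ)) atTop (𝓝 0) :=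
    tendsto_pow_atTop_nhds_zero_of_lt_one hq0.le hq1
  have h0 : Tendsto (fun N : ℕ => ((1:ℝ) - q ^ d * q ^ (N:ℕ)) / (1 - q ^ d)) atTop
      (𝓝 ((1 - q ^ d * 0) / (1 - q ^ d))) :=
    (tendsto_const_nhds.sub (tendsto_const_nhds.mul hlim)).div_const (1 - q ^ d)
  simpa [one_div] using h0

lemma Qp_shift_denom (hq0 : 0 < q) (hq1 : q < 1) {c d : ℝ} (hc : 0 < c) (hd : 0 < d)
    (hcd : c ≤ d + 1) : Qp q c d = Qp q c (d + 1) * (1 - q ^ d)⁻¹ := by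
  have h1 : HasProd (Qf q c (d+1)) (Qp q c (d+1)) :=
    (mult_Q hq0 hq1 hc (by linarith) hcd).hasProd
  have h2 := hasProd_tel hq0 hq1 hd
  have h3 := h1.mul h2
  have he : (fun j : ℕ => Qf q c (d+1) j *
      ((1 - q ^ (d + 1 + (j:ℝ))) / (1 - q ^ (d + (j:ℝ))))) = Qf q c d := by
    funext j
    have hne1 : (1 - q ^ (d + 1 + (j:ℝ))) ≠ 0 :=
      (one_sub_pos hq0 hq1 (by positivity)).ne'
    have hne2 : (1 - q ^ (d + (j:ℝ))) ≠ 0 := (one_sub_pos hq0 hq1 (exp_pos hd j)).ne'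
    simp only [Qf]
    field_simp
  rw [he] at h3
  exact h3.tprod_eq

lemma Qp_shift_diag (hq0 : 0 < q) (hq1 : q < 1) {c d : ℝ} (hc : 0 < c) (hd : 0 < d)
    (hcd : c ≤ d) : Qp q c d = (1 - q ^ c) / (1 - q ^ d) * Qp q (c+1) (d+1) := by
  have hshift : (fun n : ℕ => Qf q c d (n+1)) = Qf q (c+1) (d+1) := by
    funext n
    simp only [Qf]
    rw [show c + ((n+1:ℕ):ℝ) = c + 1 + (n:ℝ) by push_cast; ring,
      show d + ((n+1:ℕ):ℝ) = d + 1 + (n:ℝ) by push_cast; ring]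
  have hm1 : Multipliable (fun n : ℕ => Qf q c d (n+1)) := by
    rw [hshift]
    exact mult_Q hq0 hq1 (by linarith) (by linarith) (by linarith)
  have := tprod_eq_zero_mul' hm1
  rw [Qp, this, hshift]
  congr 1
  simp only [Qf, Nat.cast_zero, add_zero]


end QFracAux


namespace QFracAux

variable {α : ℝ}

lemma qFac_eq (hq0 : 0 < q) (hq1 : q < 1) (hα0 : 0 < α) (hα1 : α < 1)
    {p i : ℤ} (hpi : p ≤ i) :
    qFac q α p (i+1) = q ^ (-(p:ℝ) * α) *
      (Qp q ((i:ℝ) - p + 1) ((i:ℝ) - p + 2 - α) * (1 - q ^ ((i:ℝ) - p + 1 - α))⁻¹) := by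
  have hpi' : (p:ℝ) ≤ (i:ℝ) := by exact_mod_cast hpi
  have hc : (0:ℝ) < (i:ℝ) - p + 1 := by linarith
  have hd : (0:ℝ) < (i:ℝ) - p + 1 - α := by linarith
  have h1 : (fun j : ℕ => (1 - q ^ (((i + 1 - p : ℤ) : ℝ) + (j : ℝ))) /
      (1 - q ^ (((i + 1 - p : ℤ) : ℝ) + (j : ℝ) - α)))
      = Qf q ((i:ℝ) - p + 1) ((i:ℝ) - p + 1 - α) := by
    funext j
    rw [Qf, show ((i + 1 - p : ℤ) : ℝ) + (j : ℝ) = ((i:ℝ) - p + 1) + (j:ℝ) by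
        push_cast; ring,
      show ((i:ℝ) - p + 1) + (j:ℝ) - α = ((i:ℝ) - p + 1 - α) + (j:ℝ) by ring]
  rw [qFac, h1]
  have h2 : (∏' j, Qf q ((i:ℝ) - p + 1) ((i:ℝ) - p + 1 - α) j)
      = Qp q ((i:ℝ) - p + 1) ((i:ℝ) - p + 2 - α) * (1 - q ^ ((i:ℝ) - p + 1 - α))⁻¹ := by
    have := Qp_shift_denom hq0 hq1 hc hd (by linarith)
    rw [Qp] at this
    rw [this, show (i:ℝ) - p + 1 - α + 1 = (i:ℝ) - p + 2 - α by ring]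
  rw [h2]

lemma qFac_nonneg (hq0 : 0 < q) (hq1 : q < 1) (hα0 : 0 < α) (hα1 : α < 1)
    {p i : ℤ} (hpi : p ≤ i) : 0 ≤ qFac q α p (i+1) := by
  have hpi' : (p:ℝ) ≤ (i:ℝ) := by exact_mod_cast hpi
  rw [qFac_eq hq0 hq1 hα0 hα1 hpi]
  have h1 := Qp_nonneg hq0 hq1 (q := q)
    (show (0:ℝ) < (i:ℝ) - p + 1 by linarith)
    (show (0:ℝ) < (i:ℝ) - p + 2 - α by linarith)
  have h2 := (one_sub_pos hq0 hq1 (show (0:ℝ) < (i:ℝ) - p + 1 - α by linarith)).le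
  positivity

lemma sum_Icc_succ {M : Type*} [AddCommMonoid M] (f : ℤ → M) {p k : ℤ} (h : p ≤ k + 1) :
    ∑ i ∈ Finset.Icc p (k+1), f i = (∑ i ∈ Finset.Icc p k, f i) + f (k+1) := by
  have hins : Finset.Icc p (k+1) = insert (k+1) (Finset.Icc p k) := by
    ext x
    simp only [Finset.mem_Icc, Finset.mem_insert]
    omega
  rw [hins, Finset.sum_insert (by simp), add_comm]

lemma sumF (hq0 : 0 < q) (hq1 : q < 1) (hα0 : 0 < α) (hα1 : α < 1)
    (p : ℤ) : ∀ k : ℤ, p ≤ k →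
    (1 - q ^ (1 - α)) * ∑ i ∈ Finset.Icc p k, q ^ ((i:ℝ)) * qFac q α p (i+1)
      = q ^ ((p:ℝ) * (1 - α)) * Qp q ((k:ℝ) - p + 1) ((k:ℝ) - p + 2 - α) := by
  have hv : (0:ℝ) < 1 - q ^ (1 - α) := one_sub_pos hq0 hq1 (by linarith)
  refine Int.le_induction ?_ ?_
  · rw [Finset.Icc_self, Finset.sum_singleton, qFac_eq hq0 hq1 hα0 hα1 le_rfl,
      show (p:ℝ) - p + 1 - α = 1 - α by ring]
    have e1 : q ^ ((p:ℝ)) * q ^ (-(p:ℝ) * α) = q ^ ((p:ℝ) * (1 - α)) := by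
      rw [← Real.rpow_add hq0]; ring_nf
    rw [show (1 - q ^ (1 - α)) * (q ^ ((p:ℝ)) * (q ^ (-(p:ℝ) * α) *
          (Qp q ((p:ℝ) - p + 1) ((p:ℝ) - p + 2 - α) * (1 - q ^ (1 - α))⁻¹)))
        = (q ^ ((p:ℝ)) * q ^ (-(p:ℝ) * α)) *
          Qp q ((p:ℝ) - p + 1) ((p:ℝ) - p + 2 - α) *
          ((1 - q ^ (1 - α)) * (1 - q ^ (1 - α))⁻¹) by ring, e1,
      mul_inv_cancel₀ hv.ne', mul_one]
  · intro k hpk ih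
    rw [sum_Icc_succ _ (by omega), mul_add, ih, qFac_eq hq0 hq1 hα0 hα1 (by omega)]
    have hpk' : (p:ℝ) ≤ (k:ℝ) := by exact_mod_cast hpk
    -- rewrite casts of k+1
    have ck3 : ((k+1:ℤ):ℝ) - p + 1 - α = ((k:ℝ) - p + 1) + (1 - α) := by push_cast; ring
    have ck1 : ((k+1:ℤ):ℝ) - p + 1 = ((k:ℝ) - p + 1) + 1 := by push_cast; ring
    have ck2 : ((k+1:ℤ):ℝ) - p + 2 - α = ((k:ℝ) - p + 2 - α) + 1 := by push_cast; ring
    rw [ck3, ck1, ck2]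
    -- diagonal shift on Qp ((k:ℝ)-p+1) ((k:ℝ)-p+2-α)
    have hc : (0:ℝ) < (k:ℝ) - p + 1 := by linarith
    have hdiag := Qp_shift_diag hq0 hq1 hc
      (show (0:ℝ) < (k:ℝ) - p + 2 - α by linarith) (by linarith)
    rw [hdiag, show (k:ℝ) - (p:ℝ) + 2 - α = ((k:ℝ) - p + 1) + (1 - α) by ring]
    -- abbreviations
    set Z := Qp q (((k:ℝ) - p + 1) + 1) ((((k:ℝ) - p + 1) + (1 - α)) + 1) with hZ
    have hw : q ^ (((k:ℝ) - p + 1) + (1 - α)) = q ^ ((k:ℝ) - p + 1) * q ^ (1 - α) :=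
      Real.rpow_add hq0 _ _
    have hu : q ^ (((k+1:ℤ)):ℝ) * q ^ (-(p:ℝ) * α)
        = q ^ ((p:ℝ) * (1 - α)) * q ^ ((k:ℝ) - p + 1) := by
      rw [← Real.rpow_add hq0, ← Real.rpow_add hq0]
      congr 1
      push_cast; ring
    have hden : (0:ℝ) < 1 - q ^ (((k:ℝ) - p + 1) + (1 - α)) :=
      one_sub_pos hq0 hq1 (by linarith)
    have hqc : q ^ ((k:ℝ) - p + 1) < 1 :=
      Real.rpow_lt_one hq0.le hq1 (by linarith)
    have hqcpos : 0 < q ^ ((k:ℝ) - p + 1) := Real.rpow_pos_of_pos hq0 _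
    -- goal is now scalar algebra
    rw [show (1 - q ^ (1 - α)) * (q ^ (((k+1:ℤ)):ℝ) * (q ^ (-(p:ℝ) * α) *
          (Z * (1 - q ^ (((k:ℝ) - p + 1) + (1 - α)))⁻¹)))
        = (q ^ (((k+1:ℤ)):ℝ) * q ^ (-(p:ℝ) * α)) * (1 - q ^ (1 - α)) * Z *
            (1 - q ^ (((k:ℝ) - p + 1) + (1 - α)))⁻¹ by ring, hu, hw]
    set u := q ^ ((p:ℝ) * (1 - α))
    set v := q ^ (1 - α)
    set w := q ^ ((k:ℝ) - p + 1)
    rw [hw] at hden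
    field_simp
    ring

end QFracAux

open QFracAux

/-- If `y(a) ≤ 0` (with `a = q^{n0}`) and `y` is decreasing on `T_q`
(i.e. `y(q^{n-1}) ≤ y(q^n)`), then the Riemann q-fractional derivative of order
`α ∈ (0,1)` based at `qa` is nonpositive at every `t = q^n`, `n < n0`. -/
theorem qFrac_nonpos_of_decreasing (q α : ℝ) (hq0 : 0 < q) (hq1 : q < 1)
    (hα0 : 0 < α) (hα1 : α < 1) (n0 : ℤ) (y : ℤ → ℝ)
    (hy : y n0 ≤ 0)
    (hdec : ∀ n : ℤ, n ≤ n0 → y (n - 1) ≤ y n) :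
    ∀ n : ℤ, n < n0 → S q α n0 y n - S q α n0 y (n + 1) ≤ 0 := by
  intro n hn
  have hv : (0:ℝ) < 1 - q ^ (1 - α) := one_sub_pos hq0 hq1 (by linarith)
  set F : ℤ → ℝ := fun i => q ^ ((i:ℝ)) * qFac q α n (i+1) with hF
  set G : ℤ → ℝ := fun i => q ^ ((i:ℝ)) * qFac q α (n+1) (i+1) with hG
  set B : ℤ → ℝ := fun k =>
    (∑ i ∈ Finset.Icc n k, F i) - ∑ i ∈ Finset.Icc (n+1) k, G i with hB
  set W : ℤ → ℝ := fun k =>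
    (∑ i ∈ Finset.Icc n k, F i * y i) - ∑ i ∈ Finset.Icc (n+1) k, G i * y i with hW
  have hBnonneg : ∀ k : ℤ, n ≤ k → 0 ≤ B k := by
    intro k hk
    rcases eq_or_lt_of_le hk with rfl | hlt
    · have he : Finset.Icc (n+1) n = ∅ := Finset.Icc_eq_empty (by omega)
      have hBn : B n = F n := by
        simp [hB, he, Finset.Icc_self]
      rw [hBn, hF]
      have := qFac_nonneg hq0 hq1 hα0 hα1 (le_refl n)
      positivity
    · have hk1 : n + 1 ≤ k := hlt
      have h1 := sumF hq0 hq1 hα0 hα1 n k hk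
      have h2 := sumF hq0 hq1 hα0 hα1 (n+1) k hk1
      rw [show ((k:ℝ) - ((n+1:ℤ):ℝ) + 1) = (k:ℝ) - n by push_cast; ring,
        show ((k:ℝ) - ((n+1:ℤ):ℝ) + 2 - α) = (k:ℝ) - n + 1 - α by push_cast; ring,
        show (((n+1:ℤ)):ℝ) * (1 - α) = (n:ℝ) * (1 - α) + (1 - α) by push_cast; ring,
        Real.rpow_add hq0] at h2
      have hkn : (0:ℝ) < (k:ℝ) - n := by
        have : (n:ℝ) < (k:ℝ) := by exact_mod_cast hlt
        linarith
      have hdiag := Qp_shift_diag hq0 hq1 (c := (k:ℝ) - n) (d := (k:ℝ) - n + 1 - α)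
        hkn (by linarith) (by linarith)
      rw [show (k:ℝ) - (n:ℝ) + 1 - α + 1 = (k:ℝ) - n + 2 - α by ring,
        show (k:ℝ) - (n:ℝ) + 1 = (k:ℝ) - n + 1 by ring] at hdiag
      rw [hdiag] at h2
      set QQ := Qp q ((k:ℝ) - n + 1) ((k:ℝ) - n + 2 - α) with hQQ
      have hQQ0 : 0 ≤ QQ := Qp_nonneg hq0 hq1 (by linarith) (by linarith)
      have hwv : q ^ ((k:ℝ) - (n:ℝ) + 1 - α) = q ^ ((k:ℝ) - n) * q ^ (1 - α) := by
        rw [← Real.rpow_add hq0]; ring_nf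
      have hw1 : q ^ ((k:ℝ) - (n:ℝ)) < 1 := Real.rpow_lt_one hq0.le hq1 hkn
      have hw0 : 0 < q ^ ((k:ℝ) - (n:ℝ)) := Real.rpow_pos_of_pos hq0 _
      have hden : (0:ℝ) < 1 - q ^ ((k:ℝ) - n) * q ^ (1 - α) := by
        rw [← hwv]; exact one_sub_pos hq0 hq1 (by linarith)
      rw [hwv] at h2
      have key : (1 - q ^ (1 - α)) * B k
          = QQ * (q ^ ((n:ℝ) * (1 - α)) * (1 - q ^ (1 - α))
              / (1 - q ^ ((k:ℝ) - n) * q ^ (1 - α))) := by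
        rw [hB]
        simp only
        rw [mul_sub, h1, h2]
        set u := q ^ ((n:ℝ) * (1 - α))
        set v := q ^ (1 - α)
        set w := q ^ ((k:ℝ) - (n:ℝ))
        have hne : 1 - v * w ≠ 0 := by rw [mul_comm]; exact hden.ne'
        field_simp
        ring
      have hfac : 0 ≤ q ^ ((n:ℝ) * (1 - α)) * (1 - q ^ (1 - α))
          / (1 - q ^ ((k:ℝ) - n) * q ^ (1 - α)) := by
        have : 0 < q ^ ((n:ℝ) * (1 - α)) := Real.rpow_pos_of_pos hq0 _
        positivity
      have h0 : 0 ≤ (1 - q ^ (1 - α)) * B k := key ▸ mul_nonneg hQQ0 hfac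
      exact le_of_not_gt fun hBneg => absurd h0 (not_le.mpr (mul_neg_of_pos_of_neg hv hBneg))
  have hmain : ∀ k : ℤ, n ≤ k → k ≤ n0 → W k ≤ B k * y k := by
    refine Int.le_induction ?_ ?_
    · intro _
      have he : Finset.Icc (n+1) n = ∅ := Finset.Icc_eq_empty (by omega)
      simp [hW, hB, he, Finset.Icc_self]
    · intro k hk ih hk1
      have hkn0 : k ≤ n0 := by omega
      have hWs : W (k+1) = W k + (F (k+1) - G (k+1)) * y (k+1) := by
        rw [hW]
        simp only
        rw [sum_Icc_succ _ (by omega : n ≤ k+1), sum_Icc_succ _ (by omega : n+1 ≤ k+1)]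
        ring
      have hBs : B (k+1) = B k + (F (k+1) - G (k+1)) := by
        rw [hB]
        simp only
        rw [sum_Icc_succ _ (by omega : n ≤ k+1), sum_Icc_succ _ (by omega : n+1 ≤ k+1)]
        ring
      have hyy : y k ≤ y (k+1) := by
        have := hdec (k+1) hk1
        simpa using this
      have hBk := hBnonneg k hk
      calc W (k+1) = W k + (F (k+1) - G (k+1)) * y (k+1) := hWs
        _ ≤ B k * y k + (F (k+1) - G (k+1)) * y (k+1) := by linarith [ih hkn0]
        _ ≤ B k * y (k+1) + (F (k+1) - G (k+1)) * y (k+1) := by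
            nlinarith [mul_le_mul_of_nonneg_left hyy hBk]
        _ = B (k+1) * y (k+1) := by rw [hBs]; ring
  have h1 := hmain n0 hn.le le_rfl
  have h2 : B n0 * y n0 ≤ 0 := mul_nonpos_iff.mpr (Or.inl ⟨hBnonneg n0 hn.le, hy⟩)
  have hS : S q α n0 y n - S q α n0 y (n+1) = W n0 := by
    simp only [S, hW, hF, hG]
  linarith
end

section
/- (Riemann–Caputo relation in explicit form) Let q, α ∈ (0,1), let n0 be an integer, and let y : ℤ → ℝ. Then for every integer n ≤ n0: (S_y(n) − S_y(n+1))/q^n = Σ_{i=n}^{n0} (q^n − q^{i+1})_q^{−α} (y(i) − y(i+1)) + (q^n − q^{n0+1})_q^{−α} · y(n0+1). (This expresses the identity (_q∇_{qa}^{α} y)(t) = (_qC_{qa}^{α} y)(t) + ((t − qa)_q^{−α}/Γ_q(1−α)) y(qa) relating the Riemann and Caputo q-fractional derivatives of order α based at qa, a = q^{n0}, at t = q^n.) -/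
open Real Finset

lemma sum_log_aux {q : ℝ} (hq0 : 0 < q) (hq1 : q < 1) {c : ℝ} (hc : 0 < c) :
    Summable fun j : ℕ => -Real.log (1 - q ^ (c + (j : ℝ))) := by
  have hqc : q ^ c < 1 := Real.rpow_lt_one hq0.le hq1 hc
  have hqcpos : 0 < q ^ c := Real.rpow_pos_of_pos hq0 c
  have hterm : ∀ j : ℕ, q ^ (c + (j:ℝ)) = q ^ c * q ^ (j:ℕ) := by
    intro j; rw [Real.rpow_add hq0, Real.rpow_natCast]
  have hle : ∀ j : ℕ, q ^ (c + (j:ℝ)) ≤ q ^ c := by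
    intro j
    rw [hterm j]
    calc q ^ c * q ^ j ≤ q ^ c * 1 := by
          gcongr
          exact pow_le_one₀ hq0.le hq1.le
      _ = q ^ c := mul_one _
  have hpos : ∀ j : ℕ, 0 < q ^ (c + (j:ℝ)) := fun j => Real.rpow_pos_of_pos hq0 _
  have hx1 : ∀ j : ℕ, 0 < 1 - q ^ (c + (j:ℝ)) := fun j => by linarith [hle j]
  refine Summable.of_nonneg_of_le ?_ ?_
    (((summable_geometric_of_lt_one hq0.le hq1).mul_left (q ^ c)).mul_left (1 - q ^ c)⁻¹)
  · intro j
    rw [neg_nonneg]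
    exact Real.log_nonpos (by linarith [hx1 j]) (by linarith [hpos j])
  · intro j
    have h1 : Real.log ((1 - q ^ (c + (j:ℝ)))⁻¹) ≤ (1 - q ^ (c + (j:ℝ)))⁻¹ - 1 :=
      Real.log_le_sub_one_of_pos (inv_pos.mpr (hx1 j))
    rw [Real.log_inv] at h1
    have h2 : (1 - q ^ (c + (j:ℝ)))⁻¹ - 1 = q ^ (c + (j:ℝ)) / (1 - q ^ (c + (j:ℝ))) := by
      field_simp [(hx1 j).ne']
      ring
    have h3 : q ^ (c + (j:ℝ)) / (1 - q ^ (c + (j:ℝ))) ≤ q ^ (c + (j:ℝ)) / (1 - q ^ c) :=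
      div_le_div_of_nonneg_left (hpos j).le (by linarith) (by linarith [hle j])
    calc -Real.log (1 - q ^ (c + (j:ℝ))) ≤ (1 - q ^ (c + (j:ℝ)))⁻¹ - 1 := h1
      _ = q ^ (c + (j:ℝ)) / (1 - q ^ (c + (j:ℝ))) := h2
      _ ≤ q ^ (c + (j:ℝ)) / (1 - q ^ c) := h3
      _ = (1 - q ^ c)⁻¹ * (q ^ c * q ^ j) := by rw [hterm j]; ring

lemma mult_aux {q α : ℝ} (hq0 : 0 < q) (hq1 : q < 1) (hα0 : 0 < α) {c : ℝ} (hc : α < c) :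
    Multipliable fun j : ℕ => (1 - q ^ (c + (j:ℝ))) / (1 - q ^ (c + (j:ℝ) - α)) := by
  have hposn : ∀ j : ℕ, 0 < 1 - q ^ (c + (j:ℝ)) := by
    intro j
    have hj : (0:ℝ) ≤ (j:ℝ) := Nat.cast_nonneg j
    have : q ^ (c + (j:ℝ)) < 1 :=
      Real.rpow_lt_one hq0.le hq1 (by linarith)
    linarith
  have hposd : ∀ j : ℕ, 0 < 1 - q ^ (c + (j:ℝ) - α) := by
    intro j
    have : q ^ (c + (j:ℝ) - α) < 1 := by
      apply Real.rpow_lt_one hq0.le hq1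
      have : (0:ℝ) ≤ (j:ℝ) := Nat.cast_nonneg j
      linarith
    linarith
  have hsum : Summable fun j : ℕ =>
      Real.log ((1 - q ^ (c + (j:ℝ))) / (1 - q ^ (c + (j:ℝ) - α))) := by
    have h1 : Summable fun j : ℕ => -Real.log (1 - q ^ (c + (j:ℝ))) :=
      sum_log_aux hq0 hq1 (by linarith)
    have h2 : Summable fun j : ℕ => -Real.log (1 - q ^ ((c - α) + (j:ℝ))) :=
      sum_log_aux hq0 hq1 (by linarith)
    apply (h1.neg.sub h2.neg).congr
    intro j
    rw [Real.log_div (hposn j).ne' (hposd j).ne']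
    simp only [neg_neg]
    congr 3
    ring
  exact Real.multipliable_of_summable_log (fun j => div_pos (hposn j) (hposd j)) hsum

set_option maxHeartbeats 1000000 in
lemma tprod_shift {q α : ℝ} (hq0 : 0 < q) (hq1 : q < 1) (hα0 : 0 < α) {c : ℝ} (hc : α < c) :
    (∏' j : ℕ, (1 - q ^ (c + (j:ℝ))) / (1 - q ^ (c + (j:ℝ) - α)))
      = ((1 - q ^ c) / (1 - q ^ (c - α))) *
        ∏' j : ℕ, (1 - q ^ (c + 1 + (j:ℝ))) / (1 - q ^ (c + 1 + (j:ℝ) - α)) := by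
  have hshift : Multipliable fun j : ℕ =>
      (1 - q ^ (c + ((j+1 : ℕ):ℝ))) / (1 - q ^ (c + ((j+1 : ℕ):ℝ) - α)) := by
    apply (mult_aux hq0 hq1 hα0 (c := c + 1) (by linarith)).congr
    intro j
    rw [show ((j+1 : ℕ):ℝ) = (j:ℝ) + 1 from by push_cast; ring,
      show c + ((j:ℝ) + 1) = c + 1 + (j:ℝ) from by ring]
  rw [tprod_eq_zero_mul' hshift]
  congr 1
  · norm_num
  · apply tprod_congr
    intro j
    rw [show ((j+1 : ℕ):ℝ) = (j:ℝ) + 1 from by push_cast; ring,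
      show c + ((j:ℝ) + 1) = c + 1 + (j:ℝ) from by ring]


lemma qFac_key {q α : ℝ} (hq0 : 0 < q) (hq1 : q < 1) (hα0 : 0 < α) (hα1 : α < 1)
    {n i : ℤ} (h : n + 1 ≤ i) :
    q ^ (i:ℝ) * qFac q α n (i+1) - q ^ (i:ℝ) * qFac q α (n+1) (i+1)
      = q ^ (n:ℝ) * (qFac q α n (i+1) - qFac q α n i) := by
  unfold qFac
  have e1 : ((i + 1 - n : ℤ) : ℝ) = ((i:ℝ) - (n:ℝ)) + 1 := by push_cast; ring
  have e2 : ((i + 1 - (n+1) : ℤ) : ℝ) = (i:ℝ) - (n:ℝ) := by push_cast; ring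
  have e3 : ((i - n : ℤ) : ℝ) = (i:ℝ) - (n:ℝ) := by push_cast; ring
  have e4 : (-((n+1 : ℤ):ℝ) * α) = -((n:ℝ) + 1) * α := by push_cast; ring
  simp only [e1, e2, e3, e4]
  have hc1 : (1:ℝ) ≤ (i:ℝ) - (n:ℝ) := by
    have : (1:ℤ) ≤ i - n := by omega
    exact_mod_cast this
  have hcα : α < (i:ℝ) - (n:ℝ) := lt_of_lt_of_le hα1 hc1
  rw [tprod_shift hq0 hq1 hα0 hcα]
  set c : ℝ := (i:ℝ) - (n:ℝ) with hcdef
  set P : ℝ := ∏' j : ℕ, (1 - q ^ (c + 1 + (j:ℝ))) / (1 - q ^ (c + 1 + (j:ℝ) - α)) with hP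
  have hden : (1:ℝ) - q ^ (c - α) ≠ 0 := by
    have : q ^ (c - α) < 1 := Real.rpow_lt_one hq0.le hq1 (by linarith)
    linarith
  have main : q ^ (i:ℝ) * q ^ (-(n:ℝ) * α)
        - q ^ (i:ℝ) * (q ^ (-((n:ℝ) + 1) * α) * ((1 - q ^ c) / (1 - q ^ (c - α))))
      = q ^ (n:ℝ) * q ^ (-(n:ℝ) * α)
        - q ^ (n:ℝ) * (q ^ (-(n:ℝ) * α) * ((1 - q ^ c) / (1 - q ^ (c - α)))) := by
    rw [div_eq_mul_inv]
    field_simp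
    simp only [Real.rpow_def_of_pos hq0, ← Real.exp_add, hcdef]
    ring_nf
    simp only [← Real.rpow_intCast q, Real.rpow_def_of_pos hq0, ← Real.exp_add]
    ring_nf
  linear_combination P * main

/-- Riemann–Caputo relation in explicit form: for every `n ≤ n0`,
`(S_y(n) - S_y(n+1))/q^n
  = Σ_{i=n}^{n0} (q^n - q^{i+1})_q^{-α} (y(i) - y(i+1)) + (q^n - q^{n0+1})_q^{-α} y(n0+1)`,
which expresses `(_q∇_{qa}^α y)(t) = (_qC_{qa}^α y)(t) + ((t - qa)_q^{-α}/Γ_q(1-α)) y(qa)`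
at `t = q^n`, with base point `qa = q^{n0+1}`. -/
theorem qFrac_riemann_caputo (q α : ℝ) (hq0 : 0 < q) (hq1 : q < 1)
    (hα0 : 0 < α) (hα1 : α < 1) (n0 : ℤ) (y : ℤ → ℝ) :
    ∀ n : ℤ, n ≤ n0 →
      (S q α n0 y n - S q α n0 y (n + 1)) / q ^ (n : ℝ) =
        (∑ i ∈ Finset.Icc n n0, qFac q α n (i + 1) * (y i - y (i + 1))) +
          qFac q α n (n0 + 1) * y (n0 + 1) := by
  intro n hn
  have hsplit : Finset.Icc n n0 = insert n (Finset.Icc (n+1) n0) := by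
    ext j; simp only [Finset.mem_Icc, Finset.mem_insert]; omega
  have hnot : n ∉ Finset.Icc (n+1) n0 := by simp
  have hsplit2 : Finset.Icc (n+1) (n0+1) = insert (n0+1) (Finset.Icc (n+1) n0) := by
    ext j; simp only [Finset.mem_Icc, Finset.mem_insert]; omega
  have hnot2 : (n0+1) ∉ Finset.Icc (n+1) n0 := by simp
  set E : ℝ := q ^ (n:ℝ) * qFac q α n (n+1) * y n +
      ∑ i ∈ Finset.Icc (n+1) n0, q ^ (n:ℝ) * ((qFac q α n (i+1) - qFac q α n i) * y i)
    with hE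
  have h1 : S q α n0 y n - S q α n0 y (n + 1) = E := by
    rw [S, S, hsplit, Finset.sum_insert hnot, hE]
    rw [add_sub_assoc, ← Finset.sum_sub_distrib]
    congr 1
    apply Finset.sum_congr rfl
    intro i hi
    have hi' : n + 1 ≤ i := (Finset.mem_Icc.mp hi).1
    have key := qFac_key hq0 hq1 hα0 hα1 hi'
    linear_combination y i * key
  have hre : ∑ i ∈ Finset.Icc n n0, qFac q α n (i+1) * y (i+1)
      = qFac q α n (n0+1) * y (n0+1) + ∑ i ∈ Finset.Icc (n+1) n0, qFac q α n i * y i := by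
    have hmap := Finset.sum_map (Finset.Icc n n0) (addRightEmbedding (1:ℤ))
      (fun i => qFac q α n i * y i)
    rw [Finset.map_add_right_Icc] at hmap
    simp only [addRightEmbedding_apply] at hmap
    rw [← hmap, hsplit2, Finset.sum_insert hnot2]
  have h2 : q ^ (n:ℝ) * ((∑ i ∈ Finset.Icc n n0, qFac q α n (i + 1) * (y i - y (i + 1))) +
      qFac q α n (n0 + 1) * y (n0 + 1)) = E := by
    have expand : ∀ i ∈ Finset.Icc n n0, qFac q α n (i + 1) * (y i - y (i + 1))
        = qFac q α n (i+1) * y i - qFac q α n (i+1) * y (i+1) := by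
      intro i _; ring
    have hsum3 : ∑ i ∈ Finset.Icc (n+1) n0, q ^ (n:ℝ) * ((qFac q α n (i+1) - qFac q α n i) * y i)
        = q ^ (n:ℝ) * ((∑ i ∈ Finset.Icc (n+1) n0, qFac q α n (i+1) * y i)
            - ∑ i ∈ Finset.Icc (n+1) n0, qFac q α n i * y i) := by
      rw [← Finset.sum_sub_distrib, Finset.mul_sum]
      apply Finset.sum_congr rfl
      intro i _
      ring
    rw [Finset.sum_congr rfl expand, Finset.sum_sub_distrib, hre,
      hsplit, Finset.sum_insert hnot, hE, hsum3]
    ring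
  rw [h1, ← h2, mul_comm, mul_div_assoc, div_self (Real.rpow_pos_of_pos hq0 n).ne', mul_one]
end
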